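/- Assume min(p_0 + p_1, v) < 1, and let v, z, w ∈ (0,1], b ∈ ℕ₀ and x ∈ ℤ with x ≤ b. Then the joint transform of the ruin time, deficit at ruin and cumulative dividends of the walk reflected at b satisfies E_x[v^T · w^{−X̃_T} · z^{R(T)}; T < ∞] = Z_v(x,w) − ((Z_v(b+1,w) − z·Z_v(b,w))/(W_v(b+1) − z·W_v(b)))·W_v(x). -/

import Mathlib

open MeasureTheory Set
open scoped ENNReal

noncomputable section

namespace RW

/-- Probability generating function of `p`. -/
def ptilde (p : ℕ → ℝ) (z : ℝ) : ℝ := ∑' k : ℕ, p k * z ^ k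

variable {Ω : Type*} [MeasurableSpace Ω]

/-- The upwards skip-free random walk started at `x` (driven by the claims `C`). -/
def walk (C : ℕ → Ω → ℕ) (x : ℤ) (n : ℕ) (ω : Ω) : ℤ :=
  x + n - ∑ i ∈ Finset.range n, (C i ω : ℤ)

/-- First passage time (weakly) below `b`, `= ⊤` if it never happens. -/
def tauMinus (C : ℕ → Ω → ℕ) (x b : ℤ) (ω : Ω) : ℕ∞ :=
  sInf ((fun n : ℕ => (n : ℕ∞)) '' {n : ℕ | walk C x n ω ≤ b})

/-- First passage time (weakly) above `b`, `= ⊤` if it never happens. -/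
def tauPlus (C : ℕ → Ω → ℕ) (x b : ℤ) (ω : Ω) : ℕ∞ :=
  sInf ((fun n : ℕ => (n : ℕ∞)) '' {n : ℕ | b ≤ walk C x n ω})

/-- `E[f ; A]`, the expectation of `f` on the event `A`. -/
def Eind (P : Measure Ω) (A : Set Ω) (f : Ω → ℝ) : ℝ := ∫ ω, A.indicator f ω ∂P

/-- The first scale function `W_v`. -/
def W (P : Measure Ω) (C : ℕ → Ω → ℕ) (v p0 : ℝ) (y : ℤ) : ℝ :=
  if 0 ≤ y then
    1 / (p0 * Eind P {ω | tauPlus C 0 y ω < tauMinus C 0 (-1) ω}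
          fun ω => v ^ (tauPlus C 0 y ω).toNat)
  else 0

/-- The joint transform of the ruin time and the deficit at ruin. -/
def Psi (P : Measure Ω) (C : ℕ → Ω → ℕ) (v w : ℝ) (x : ℤ) : ℝ :=
  Eind P {ω | tauMinus C x (-1) ω < ⊤}
    fun ω => v ^ (tauMinus C x (-1) ω).toNat *
      w ^ (-(walk C x (tauMinus C x (-1) ω).toNat ω))

/-- The second scale function `Z_v(·, w)` (normalized so that `Z_v(0,w) = 1`). -/
def Z (P : Measure Ω) (C : ℕ → Ω → ℕ) (v w p0 : ℝ) (x : ℤ) : ℝ :=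
  Psi P C v w x + p0 * (1 - Psi P C v w 0) * W P C v p0 x

/-- Cumulative capital injections of the walk reflected at `0`. -/
def Rstar (C : ℕ → Ω → ℕ) (x : ℤ) (n : ℕ) (ω : Ω) : ℤ :=
  max 0 (-(Finset.range (n + 1)).inf' Finset.nonempty_range_add_one fun m => walk C x m ω)

/-- First entrance time of the walk reflected at `0` into `[b, ∞)`. -/
def tauTildePlus (C : ℕ → Ω → ℕ) (x b : ℤ) (ω : Ω) : ℕ∞ :=
  sInf ((fun n : ℕ => (n : ℕ∞)) '' {n : ℕ | b ≤ walk C x n ω + Rstar C x n ω})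

/-- Cumulative dividends under the barrier policy at `b`. -/
def Rdiv (C : ℕ → Ω → ℕ) (x b : ℤ) (n : ℕ) (ω : Ω) : ℤ :=
  max 0 ((Finset.range (n + 1)).sup' Finset.nonempty_range_add_one fun m => walk C x m ω - b)

/-- Single-period dividends under the barrier policy at `b`. -/
def rdiv (C : ℕ → Ω → ℕ) (x b : ℤ) (n : ℕ) (ω : Ω) : ℤ :=
  Rdiv C x b n ω - if n = 0 then 0 else Rdiv C x b (n - 1) ω

/-- Ruin time of the walk reflected at the barrier `b`. -/
def Truin (C : ℕ → Ω → ℕ) (x b : ℤ) (ω : Ω) : ℕ∞ :=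
  sInf ((fun n : ℕ => (n : ℕ∞)) '' {n : ℕ | walk C x n ω - Rdiv C x b n ω ≤ -1})

lemma walk_stronglyMeasurable (C : ℕ → Ω → ℕ) (hC : ∀ i, Measurable (C i)) (x : ℤ) (n : ℕ) :
    StronglyMeasurable (walk C x n) := by
  have h : Measurable fun ω => ∑ i ∈ Finset.range n, (C i ω : ℤ) :=
    Finset.measurable_sum _ fun i _ => (measurable_from_top.comp (hC i))
  exact (measurable_const.sub h).stronglyMeasurable

/-! ### Auxiliary word machinery -/

/-- Positions of the deterministic path driven by the word `c`, started at `x`. -/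
def pos (x : ℤ) (c : List ℕ) (m : ℕ) : ℤ :=
  x + m - ∑ i ∈ Finset.range m, (c.getD i 0 : ℤ)

lemma pos_zero (x : ℤ) (c : List ℕ) : pos x c 0 = x := by simp [pos]

lemma pos_succ (x : ℤ) (c : List ℕ) (m : ℕ) :
    pos x c (m + 1) = pos x c m + 1 - c.getD m 0 := by
  simp only [pos, Finset.sum_range_succ]
  push_cast; ring

lemma pos_congr {c c' : List ℕ} (x : ℤ) {m : ℕ} (h : ∀ i < m, c.getD i 0 = c'.getD i 0) :
    pos x c m = pos x c' m := by
  unfold pos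
  congr 1
  exact Finset.sum_congr rfl fun i hi => by
    rw [h i (Finset.mem_range.1 hi)]

lemma pos_succ_le (x : ℤ) (c : List ℕ) (m : ℕ) : pos x c (m + 1) ≤ pos x c m + 1 := by
  rw [pos_succ]; omega

lemma pos_append (x : ℤ) (a d : List ℕ) {m : ℕ} (hm : m ≤ a.length) :
    pos x (a ++ d) m = pos x a m :=
  pos_congr x fun i hi => List.getD_append _ _ _ _ (lt_of_lt_of_le hi hm)

lemma pos_append_right (x : ℤ) (a d : List ℕ) (j : ℕ) :
    pos x (a ++ d) (a.length + j) = pos (pos x a a.length) d j := by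
  induction j with
  | zero => simp only [Nat.add_zero, pos_zero]; exact pos_append x a d le_rfl
  | succ j ih =>
      rw [← Nat.add_assoc, pos_succ, ih, pos_succ,
        List.getD_append_right _ _ _ _ (Nat.le_add_right _ _), Nat.add_sub_cancel_left]

lemma pos_shift (x y : ℤ) (c : List ℕ) (m : ℕ) : pos (x + y) c m = pos x c m + y := by
  unfold pos; ring

/-- The cylinder set of the word `c`. -/
def Cyl (C : ℕ → Ω → ℕ) (c : List ℕ) : Set Ω := {ω | ∀ i < c.length, C i ω = c.getD i 0}

/-- The probability weight of the word `c`. -/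
def wt (p : ℕ → ℝ) (c : List ℕ) : ℝ≥0∞ :=
  ∏ i ∈ Finset.range c.length, ENNReal.ofReal (p (c.getD i 0))

lemma wt_ne_top (p : ℕ → ℝ) (c : List ℕ) : wt p c ≠ ⊤ := by
  refine (ENNReal.prod_lt_top ?_).ne
  intro i _
  exact ENNReal.ofReal_lt_top

lemma wt_append (p : ℕ → ℝ) (a d : List ℕ) : wt p (a ++ d) = wt p a * wt p d := by
  unfold wt
  rw [List.length_append, Finset.prod_range_add]
  congr 1
  · exact Finset.prod_congr rfl fun i hi => by
      rw [List.getD_append _ _ _ _ (Finset.mem_range.1 hi)]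
  · exact Finset.prod_congr rfl fun i _ => by
      rw [List.getD_append_right _ _ _ _ (Nat.le_add_right _ _), Nat.add_sub_cancel_left]

lemma measurableSet_cyl {C : ℕ → Ω → ℕ} (hC : ∀ i, Measurable (C i)) (c : List ℕ) :
    MeasurableSet (Cyl C c) := by
  have : Cyl C c = ⋂ i ∈ Finset.range c.length, (C i) ⁻¹' {c.getD i 0} := by
    ext ω; simp [Cyl]
  rw [this]
  exact MeasurableSet.biInter (Finset.range c.length).countable_toSet
    fun i _ => (hC i) (measurableSet_singleton _)

lemma meas_cyl (P : Measure Ω) (C : ℕ → Ω → ℕ) (p : ℕ → ℝ)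
    (hindep : ProbabilityTheory.iIndepFun C P)
    (hdist : ∀ i k, P {ω | C i ω = k} = ENNReal.ofReal (p k)) (c : List ℕ) :
    P (Cyl C c) = wt p c := by
  have hset : Cyl C c = ⋂ i ∈ Finset.range c.length, (C i) ⁻¹' {c.getD i 0} := by
    ext ω; simp [Cyl]
  rw [hset, hindep.measure_inter_preimage_eq_mul (Finset.range c.length)
    (sets := fun i => {c.getD i 0}) (fun i _ => measurableSet_singleton _)]
  refine Finset.prod_congr rfl fun i _ => ?_
  rw [← hdist i (c.getD i 0)]
  congr 1

/-- Word of the first `n` claims. -/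
def wrd (C : ℕ → Ω → ℕ) (n : ℕ) (ω : Ω) : List ℕ := List.ofFn fun i : Fin n => C i ω

lemma wrd_length (C : ℕ → Ω → ℕ) (n : ℕ) (ω : Ω) : (wrd C n ω).length = n := by
  simp [wrd]

lemma wrd_getD (C : ℕ → Ω → ℕ) (n : ℕ) (ω : Ω) {i : ℕ} (hi : i < n) :
    (wrd C n ω).getD i 0 = C i ω := by
  rw [List.getD_eq_getElem _ _ (by simpa [wrd] using hi)]
  simp [wrd]

lemma mem_cyl_wrd (C : ℕ → Ω → ℕ) (n : ℕ) (ω : Ω) : ω ∈ Cyl C (wrd C n ω) := by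
  intro i hi
  rw [wrd_getD C n ω (by simpa [wrd] using hi)]

lemma walk_on_cyl {C : ℕ → Ω → ℕ} {c : List ℕ} {ω : Ω} (hω : ω ∈ Cyl C c) (x : ℤ)
    {m : ℕ} (hm : m ≤ c.length) : walk C x m ω = pos x c m := by
  unfold walk pos
  congr 1
  exact Finset.sum_congr rfl fun i hi => by
    rw [hω i (lt_of_lt_of_le (Finset.mem_range.1 hi) hm)]

/-- If `ω` lies in two cylinders, the shorter word is a prefix of the longer. -/
lemma cyl_agree {C : ℕ → Ω → ℕ} {c c' : List ℕ} {ω : Ω} (hω : ω ∈ Cyl C c)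
    (hω' : ω ∈ Cyl C c') {i : ℕ} (hi : i < c.length) (hi' : i < c'.length) :
    c.getD i 0 = c'.getD i 0 := by
  rw [← hω i hi, hω' i hi']

/-! ### `sInf` helpers for `ℕ∞`-valued hitting times -/

lemma sInf_image_eq {S : Set ℕ} {n : ℕ} (hn : n ∈ S) (hmin : ∀ m < n, m ∉ S) :
    sInf ((fun n : ℕ => (n : ℕ∞)) '' S) = n := by
  refine le_antisymm (sInf_le ⟨n, hn, rfl⟩) (le_sInf ?_)
  rintro a ⟨m, hm, rfl⟩
  have : n ≤ m := not_lt.1 fun h => hmin m h hm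
  show (n : ℕ∞) ≤ (m : ℕ∞)
  exact_mod_cast this

lemma sInf_image_lt_top_iff {S : Set ℕ} :
    sInf ((fun n : ℕ => (n : ℕ∞)) '' S) < ⊤ ↔ S.Nonempty := by
  constructor
  · intro h
    by_contra hS
    rw [Set.not_nonempty_iff_eq_empty] at hS
    simp [hS] at h
  · rintro ⟨n, hn⟩
    exact lt_of_le_of_lt (sInf_le ⟨n, hn, rfl⟩) (by exact_mod_cast WithTop.coe_lt_top n)

lemma lt_sInf_image {S : Set ℕ} {n : ℕ} (h : ∀ m ≤ n, m ∉ S) :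
    (n : ℕ∞) < sInf ((fun n : ℕ => (n : ℕ∞)) '' S) := by
  have h1 : ∀ m ∈ S, n + 1 ≤ m := by
    intro m hm
    by_contra hc
    exact h m (by omega) hm
  have h2 : ((n + 1 : ℕ) : ℕ∞) ≤ sInf ((fun n : ℕ => (n : ℕ∞)) '' S) := by
    refine le_sInf ?_
    rintro a ⟨m, hm, rfl⟩
    show ((n + 1 : ℕ) : ℕ∞) ≤ (m : ℕ∞)
    exact_mod_cast h1 m hm
  refine lt_of_lt_of_le ?_ h2
  exact_mod_cast Nat.lt_succ_self n

lemma exists_least {S : Set ℕ} (h : S.Nonempty) : ∃ n ∈ S, ∀ m < n, m ∉ S := by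
  classical
  obtain ⟨n, hn⟩ := h
  exact ⟨Nat.find ⟨n, hn⟩, Nat.find_spec (⟨n, hn⟩ : ∃ n, n ∈ S),
    fun m hm => Nat.find_min (⟨n, hn⟩ : ∃ n, n ∈ S) hm⟩

/-! ### The master lemma: `Eind` over a prefix-free family of cylinders as a `tsum` -/

lemma tsum_wt_le_one (P : Measure Ω) [IsProbabilityMeasure P]
    (C : ℕ → Ω → ℕ) (hC : ∀ i, Measurable (C i)) (p : ℕ → ℝ)
    (hindep : ProbabilityTheory.iIndepFun C P)
    (hdist : ∀ i k, P {ω | C i ω = k} = ENNReal.ofReal (p k))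
    {D : Set (List ℕ)} (hdisj : D.PairwiseDisjoint (Cyl C)) :
    ∑' c : D, wt p c ≤ 1 := by
  have h1 : ∑' c : D, wt p (c : List ℕ) = ∑' c : D, P (Cyl C c) := by
    exact tsum_congr fun c => (meas_cyl P C p hindep hdist c).symm
  rw [h1, ← measure_biUnion D.to_countable hdisj (fun c _ => measurableSet_cyl hC c)]
  exact prob_le_one

lemma eind_eq_tsum (P : Measure Ω) [IsProbabilityMeasure P]
    (C : ℕ → Ω → ℕ) (hC : ∀ i, Measurable (C i)) (p : ℕ → ℝ)
    (hindep : ProbabilityTheory.iIndepFun C P)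
    (hdist : ∀ i k, P {ω | C i ω = k} = ENNReal.ofReal (p k))
    {D : Set (List ℕ)} {val : List ℕ → ℝ} {A : Set Ω} {F : Ω → ℝ}
    (hval0 : ∀ c ∈ D, 0 ≤ val c) (hval1 : ∀ c ∈ D, val c ≤ 1)
    (hdisj : D.PairwiseDisjoint (Cyl C))
    (hA : A = ⋃ c ∈ D, Cyl C c)
    (hF : ∀ c ∈ D, ∀ ω ∈ Cyl C c, F ω = val c) :
    Eind P A F = (∑' c : D, ENNReal.ofReal (val c) * wt p c).toReal := by
  classical
  have hwt : ∑' c : D, wt p c ≤ 1 := tsum_wt_le_one P C hC p hindep hdist hdisj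
  -- pointwise identity
  have hpt : ∀ ω, A.indicator F ω
      = ∑' c : D, (Cyl C (c : List ℕ)).indicator (fun _ => val (c : List ℕ)) ω := by
    intro ω
    by_cases hωA : ω ∈ A
    · rw [hA] at hωA
      simp only [Set.mem_iUnion] at hωA
      obtain ⟨c₀, hc₀D, hc₀⟩ := hωA
      have : ∑' c : D, (Cyl C (c : List ℕ)).indicator (fun _ => val (c : List ℕ)) ω
          = (Cyl C c₀).indicator (fun _ => val c₀) ω := by
        refine tsum_eq_single (⟨c₀, hc₀D⟩ : D) ?_
        intro c hc
        have hne : (c : List ℕ) ≠ c₀ := fun h => hc (Subtype.ext h)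
        by_cases hωc : ω ∈ Cyl C (c : List ℕ)
        · exact absurd (Set.mem_inter hωc hc₀)
            (Set.disjoint_iff_inter_eq_empty.1 (hdisj c.2 hc₀D hne) ▸ Set.notMem_empty ω)
        · simp [Set.indicator_of_notMem hωc]
      rw [this, Set.indicator_of_mem hc₀, Set.indicator_of_mem
        (by rw [hA]; exact Set.mem_biUnion hc₀D hc₀)]
      exact hF c₀ hc₀D ω hc₀
    · rw [Set.indicator_of_notMem hωA]
      have : ∀ c : D, (Cyl C (c : List ℕ)).indicator (fun _ => val (c : List ℕ)) ω = 0 := by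
        intro c
        refine Set.indicator_of_notMem (fun hωc => hωA ?_) _
        rw [hA]
        exact Set.mem_biUnion c.2 hωc
      simp [this]
    -- integral
  have hnorm : ∀ c : D, (fun ω => (‖(Cyl C (c : List ℕ)).indicator
      (fun _ => val (c : List ℕ)) ω‖₊ : ℝ≥0∞)) =
      (Cyl C (c : List ℕ)).indicator (fun _ => (‖val (c : List ℕ)‖₊ : ℝ≥0∞)) := by
    intro c
    ext ω
    by_cases hωc : ω ∈ Cyl C (c : List ℕ) <;>
      simp [Set.indicator_of_mem, Set.indicator_of_notMem, hωc]
  have hlint : ∀ c : D, ∫⁻ ω, ‖(Cyl C (c : List ℕ)).indicator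
      (fun _ => val (c : List ℕ)) ω‖₊ ∂P = ‖val (c : List ℕ)‖₊ * P (Cyl C c) := by
    intro c
    rw [hnorm c]
    exact lintegral_indicator_const (measurableSet_cyl hC _) _
  have hbound : ∀ c : D, (‖val (c : List ℕ)‖₊ : ℝ≥0∞) * P (Cyl C c) ≤ wt p c := by
    intro c
    rw [meas_cyl P C p hindep hdist]
    refine mul_le_of_le_one_left zero_le ?_
    rw [← ENNReal.ofReal_coe_nnreal, coe_nnnorm, Real.norm_of_nonneg (hval0 c c.2)]
    exact ENNReal.ofReal_le_one.2 (hval1 c c.2)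
  have hsummable : ∑' c : D, ∫⁻ ω, ‖(Cyl C (c : List ℕ)).indicator
      (fun _ => val (c : List ℕ)) ω‖₊ ∂P ≠ ⊤ := by
    refine ne_top_of_le_ne_top (by simp : (1 : ℝ≥0∞) ≠ ⊤) ?_
    calc ∑' c : D, ∫⁻ ω, ‖(Cyl C (c : List ℕ)).indicator
          (fun _ => val (c : List ℕ)) ω‖₊ ∂P
        = ∑' c : D, (‖val (c : List ℕ)‖₊ : ℝ≥0∞) * P (Cyl C c) := tsum_congr hlint
      _ ≤ ∑' c : D, wt p c := ENNReal.tsum_le_tsum hbound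
      _ ≤ 1 := hwt
  have hmeas : ∀ c : D, AEStronglyMeasurable
      ((Cyl C (c : List ℕ)).indicator (fun _ => val (c : List ℕ))) P :=
    fun c => ((measurable_const.indicator (measurableSet_cyl hC _)).aestronglyMeasurable)
  have hint : Eind P A F = ∑' c : D, ∫ ω, (Cyl C (c : List ℕ)).indicator
      (fun _ => val (c : List ℕ)) ω ∂P := by
    unfold Eind
    rw [show (fun ω => A.indicator F ω) = fun ω => ∑' c : D,
      (Cyl C (c : List ℕ)).indicator (fun _ => val (c : List ℕ)) ω from funext hpt]
    exact integral_tsum hmeas hsummable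
  rw [hint]
  have hterm : ∀ c : D, ∫ ω, (Cyl C (c : List ℕ)).indicator
      (fun _ => val (c : List ℕ)) ω ∂P = val (c : List ℕ) * (wt p (c : List ℕ)).toReal := by
    intro c
    rw [integral_indicator_const _ (measurableSet_cyl hC _), measureReal_def, meas_cyl P C p hindep hdist]
    simp [mul_comm]
  rw [tsum_congr hterm, ENNReal.tsum_toReal_eq
    (fun c => ENNReal.mul_ne_top ENNReal.ofReal_ne_top (wt_ne_top p _))]
  exact tsum_congr fun c => by
    rw [ENNReal.toReal_mul, ENNReal.toReal_ofReal (hval0 c c.2)]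

lemma tsum_val_le_one (P : Measure Ω) [IsProbabilityMeasure P]
    (C : ℕ → Ω → ℕ) (hC : ∀ i, Measurable (C i)) (p : ℕ → ℝ)
    (hindep : ProbabilityTheory.iIndepFun C P)
    (hdist : ∀ i k, P {ω | C i ω = k} = ENNReal.ofReal (p k))
    {D : Set (List ℕ)} {val : List ℕ → ℝ}
    (hval1 : ∀ c ∈ D, val c ≤ 1)
    (hdisj : D.PairwiseDisjoint (Cyl C)) :
    ∑' c : D, ENNReal.ofReal (val c) * wt p c ≤ 1 := by
  calc ∑' c : D, ENNReal.ofReal (val (c : List ℕ)) * wt p c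
      ≤ ∑' c : D, wt p c := by
        refine ENNReal.tsum_le_tsum fun c => ?_
        refine mul_le_of_le_one_left zero_le ?_
        exact ENNReal.ofReal_le_one.2 (hval1 c c.2)
    _ ≤ 1 := tsum_wt_le_one P C hC p hindep hdist hdisj

/-! ### Word sets for the various first-passage events -/

/-- Words whose path from `x` stays above `-1` and ends (for the first time) at `≤ -1`. -/
def RuinW (x : ℤ) : Set (List ℕ) :=
  {c | (∀ m < c.length, -1 < pos x c m) ∧ pos x c c.length ≤ -1}

/-- Words whose path from `x` stays in `(-1, y)` and ends at exactly `y`. -/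
def HitW (x y : ℤ) : Set (List ℕ) :=
  {c | (∀ m < c.length, -1 < pos x c m ∧ pos x c m < y) ∧ pos x c c.length = y}

/-- The path of the walk reflected at the barrier `b`, driven by the word `c` from `x`. -/
def tpos (b x : ℤ) (c : List ℕ) : ℕ → ℤ
  | 0 => x
  | m + 1 => min (tpos b x c m + 1 - c.getD m 0) b

/-- Words whose reflected path from `x` stays above `-1` and ends at `≤ -1`. -/
def ReflW (b x : ℤ) : Set (List ℕ) :=
  {c | (∀ m < c.length, -1 < tpos b x c m) ∧ tpos b x c c.length ≤ -1}

/-- Words whose (free) path from `x` stays `≤ b` throughout. -/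
def LowW (b x : ℤ) : Set (List ℕ) := {c | ∀ m ≤ c.length, pos x c m ≤ b}

lemma tpos_congr {b x : ℤ} {c c' : List ℕ} {m : ℕ}
    (h : ∀ i < m, c.getD i 0 = c'.getD i 0) : tpos b x c m = tpos b x c' m := by
  induction m with
  | zero => rfl
  | succ m ih =>
      show min (tpos b x c m + 1 - c.getD m 0) b = min (tpos b x c' m + 1 - c'.getD m 0) b
      rw [ih (fun i hi => h i (by omega)), h m (by omega)]

lemma tpos_le_pos (b x : ℤ) (c : List ℕ) (m : ℕ) : tpos b x c m ≤ pos x c m := by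
  induction m with
  | zero => simp [tpos, pos_zero]
  | succ m ih =>
      rw [pos_succ]
      calc tpos b x c (m+1) ≤ tpos b x c m + 1 - c.getD m 0 := min_le_left _ _
        _ ≤ _ := by omega

lemma tpos_le_b {b x : ℤ} (hx : x ≤ b) (c : List ℕ) (m : ℕ) : tpos b x c m ≤ b := by
  cases m with
  | zero => exact hx
  | succ m => exact min_le_right _ _

lemma tpos_eq_pos {b x : ℤ} {c : List ℕ} {m : ℕ}
    (h : ∀ m' ≤ m, pos x c m' ≤ b) : tpos b x c m = pos x c m := by
  induction m with
  | zero => simp [tpos, pos_zero]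
  | succ m ih =>
      have hm := ih (fun m' hm' => h m' (by omega))
      show min (tpos b x c m + 1 - c.getD m 0) b = pos x c (m+1)
      rw [hm, ← pos_succ]
      exact min_eq_left (h (m+1) le_rfl)

lemma tpos_append {b x : ℤ} (a d : List ℕ) {m : ℕ} (hm : m ≤ a.length) :
    tpos b x (a ++ d) m = tpos b x a m :=
  tpos_congr fun i hi => List.getD_append _ _ _ _ (lt_of_lt_of_le hi hm)

lemma tpos_append_right (b x : ℤ) (a d : List ℕ) (j : ℕ) :
    tpos b x (a ++ d) (a.length + j) = tpos b (tpos b x (a ++ d) a.length) d j := by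
  induction j with
  | zero => rfl
  | succ j ih =>
      rw [← Nat.add_assoc]
      show min (tpos b x (a++d) (a.length + j) + 1 - (a++d).getD (a.length + j) 0) b = _
      rw [ih, List.getD_append_right _ _ _ _ (Nat.le_add_right _ _), Nat.add_sub_cancel_left]
      rfl

/-! ### `Rdiv` and the reflected walk on cylinders -/

lemma walk_zero (C : ℕ → Ω → ℕ) (x : ℤ) (ω : Ω) : walk C x 0 ω = x := by simp [walk]

lemma walk_succ (C : ℕ → Ω → ℕ) (x : ℤ) (n : ℕ) (ω : Ω) :
    walk C x (n + 1) ω = walk C x n ω + 1 - C n ω := by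
  simp only [walk, Finset.sum_range_succ]
  push_cast; ring

lemma Rdiv_zero {C : ℕ → Ω → ℕ} {x b : ℤ} (hx : x ≤ b) (ω : Ω) : Rdiv C x (b:ℤ) 0 ω = 0 := by
  unfold Rdiv
  have h1 : (Finset.range 1).sup' Finset.nonempty_range_add_one (fun m => walk C x m ω - b)
      = walk C x 0 ω - b := by
    refine le_antisymm (Finset.sup'_le _ _ fun m hm => ?_)
      (Finset.le_sup' (fun m => walk C x m ω - b) (Finset.mem_range.2 Nat.zero_lt_one))
    have : m = 0 := by simpa using hm
    subst this; exact le_rfl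
  rw [h1, walk_zero]
  omega

lemma Rdiv_succ (C : ℕ → Ω → ℕ) (x b : ℤ) (n : ℕ) (ω : Ω) :
    Rdiv C x b (n + 1) ω = max (Rdiv C x b n ω) (walk C x (n + 1) ω - b) := by
  unfold Rdiv
  have h1 : (Finset.range (n+2)).sup' Finset.nonempty_range_add_one (fun m => walk C x m ω - b)
      = max ((Finset.range (n+1)).sup' Finset.nonempty_range_add_one (fun m => walk C x m ω - b))
        (walk C x (n+1) ω - b) := by
    refine le_antisymm (Finset.sup'_le _ _ fun m hm => ?_) (max_le ?_ ?_)
    · rcases Nat.lt_succ_iff_lt_or_eq.1 (Finset.mem_range.1 hm) with h | h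
      · exact le_trans (Finset.le_sup' (fun m => walk C x m ω - b) (Finset.mem_range.2 h))
          (le_max_left _ _)
      · subst h; exact le_max_right _ _
    · refine Finset.sup'_le _ _ fun m hm => ?_
      have hm' : m < n + 1 := Finset.mem_range.1 hm
      exact Finset.le_sup' (fun m => walk C x m ω - b) (Finset.mem_range.2 (by omega))
    · exact Finset.le_sup' (fun m => walk C x m ω - b)
        (Finset.mem_range.2 (by omega : n + 1 < n + 2))
  rw [h1]
  omega

lemma tilde_on_cyl {C : ℕ → Ω → ℕ} {x b : ℤ} (hx : x ≤ b) {c : List ℕ} {ω : Ω}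
    (hω : ω ∈ Cyl C c) {m : ℕ} (hm : m ≤ c.length) :
    walk C x m ω - Rdiv C x b m ω = tpos b x c m := by
  induction m with
  | zero => rw [walk_zero, Rdiv_zero hx]; show x - 0 = x; ring
  | succ m ih =>
      have hm' : m ≤ c.length := by omega
      have ihm := ih hm'
      rw [Rdiv_succ, walk_succ]
      show _ = min (tpos b x c m + 1 - c.getD m 0) b
      rw [← ihm, ← hω m (by omega)]
      omega

lemma Rdiv_on_cyl {C : ℕ → Ω → ℕ} {x b : ℤ} (hx : x ≤ b) {c : List ℕ} {ω : Ω}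
    (hω : ω ∈ Cyl C c) {m : ℕ} (hm : m ≤ c.length) :
    Rdiv C x b m ω = pos x c m - tpos b x c m := by
  have h1 := tilde_on_cyl hx hω hm
  have h2 := walk_on_cyl hω x hm
  omega

/-! ### Disjointness of the stopping families -/

lemma eq_of_cyl_of_length {C : ℕ → Ω → ℕ} {c c' : List ℕ} {ω : Ω} (hω : ω ∈ Cyl C c)
    (hω' : ω ∈ Cyl C c') (h : c.length = c'.length) : c = c' := by
  apply List.ext_getElem h
  intro i hi hi'
  rw [← List.getD_eq_getElem c 0 hi, ← List.getD_eq_getElem c' 0 hi']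
  exact cyl_agree hω hω' hi hi'

lemma pairwiseDisjoint_of_stop {C : ℕ → Ω → ℕ} {D : Set (List ℕ)}
    (h : ∀ c ∈ D, ∀ c' ∈ D, ∀ ω : Ω, ω ∈ Cyl C c → ω ∈ Cyl C c' →
      c.length < c'.length → False) :
    D.PairwiseDisjoint (Cyl C) := by
  intro c hc c' hc' hne
  rw [Function.onFun, Set.disjoint_left]
  intro ω hω hω'
  rcases lt_trichotomy c.length c'.length with hl | hl | hl
  · exact h c hc c' hc' ω hω hω' hl
  · exact hne (eq_of_cyl_of_length hω hω' hl)
  · exact h c' hc' c hc ω hω' hω hl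

lemma ruinW_disjoint (C : ℕ → Ω → ℕ) (x : ℤ) {D : Set (List ℕ)} (hD : D ⊆ RuinW x) :
    D.PairwiseDisjoint (Cyl C) := by
  refine pairwiseDisjoint_of_stop fun c hc c' hc' ω hω hω' hl => ?_
  have h1 : pos x c' c.length = pos x c c.length :=
    (pos_congr x fun i hi => (cyl_agree hω' hω (by omega) (by omega)).symm).symm
  have h2 := (hD hc).2
  have h3 := (hD hc').1 c.length hl
  omega

lemma hitW_disjoint (C : ℕ → Ω → ℕ) (x y : ℤ) :
    (HitW x y).PairwiseDisjoint (Cyl C) := by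
  refine pairwiseDisjoint_of_stop fun c hc c' hc' ω hω hω' hl => ?_
  have h1 : pos x c' c.length = pos x c c.length :=
    (pos_congr x fun i hi => (cyl_agree hω' hω (by omega) (by omega)).symm).symm
  have h2 := hc.2
  have h3 := (hc'.1 c.length hl).2
  omega

lemma reflW_disjoint (C : ℕ → Ω → ℕ) (b x : ℤ) :
    (ReflW b x).PairwiseDisjoint (Cyl C) := by
  refine pairwiseDisjoint_of_stop fun c hc c' hc' ω hω hω' hl => ?_
  have h1 : tpos b x c' c.length = tpos b x c c.length :=
    (tpos_congr fun i hi => (cyl_agree hω' hω (by omega) (by omega)).symm).symm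
  have h2 := hc.2
  have h3 := hc'.1 c.length hl
  omega

/-! ### Identification of the events and integrands -/

lemma zpow_le_one_aux {w : ℝ} (h0 : 0 < w) (h1 : w ≤ 1) {e : ℤ} (he : 0 ≤ e) : w ^ e ≤ 1 := by
  rw [show e = (e.toNat : ℤ) from (Int.toNat_of_nonneg he).symm, zpow_natCast]
  exact pow_le_one₀ h0.le h1

lemma tauMinus_on_cyl {C : ℕ → Ω → ℕ} {x : ℤ} {c : List ℕ} (hc : c ∈ RuinW x) {ω : Ω}
    (hω : ω ∈ Cyl C c) : tauMinus C x (-1) ω = c.length := by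
  unfold tauMinus
  refine sInf_image_eq ?_ ?_
  · show walk C x c.length ω ≤ -1
    rw [walk_on_cyl hω x le_rfl]; exact hc.2
  · intro m hm
    show ¬ walk C x m ω ≤ -1
    rw [walk_on_cyl hω x (le_of_lt hm)]
    have := hc.1 m hm
    omega

lemma ruin_event_eq (C : ℕ → Ω → ℕ) (x : ℤ) :
    {ω | tauMinus C x (-1) ω < ⊤} = ⋃ c ∈ RuinW x, Cyl C c := by
  ext ω
  simp only [Set.mem_setOf_eq, Set.mem_iUnion]
  constructor
  · intro h
    have hne : {n : ℕ | walk C x n ω ≤ -1}.Nonempty := sInf_image_lt_top_iff.1 h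
    obtain ⟨n, hn, hmin⟩ := exists_least hne
    have hcyl := mem_cyl_wrd C n ω
    have hpos : ∀ m ≤ n, pos x (wrd C n ω) m = walk C x m ω := fun m hm =>
      (walk_on_cyl hcyl x (by rw [wrd_length]; exact hm)).symm
    refine ⟨wrd C n ω, ⟨⟨?_, ?_⟩, hcyl⟩⟩
    · intro m hm
      rw [wrd_length] at hm
      rw [hpos m (le_of_lt hm)]
      have := hmin m hm
      simp only [Set.mem_setOf_eq] at this
      omega
    · rw [wrd_length, hpos n le_rfl]
      exact hn
  · rintro ⟨c, hc, hω⟩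
    rw [tauMinus_on_cyl hc hω]
    exact_mod_cast WithTop.coe_lt_top c.length

lemma Psi_eq_tsum (P : Measure Ω) [IsProbabilityMeasure P]
    (C : ℕ → Ω → ℕ) (hC : ∀ i, Measurable (C i)) (p : ℕ → ℝ)
    (hindep : ProbabilityTheory.iIndepFun C P)
    (hdist : ∀ i k, P {ω | C i ω = k} = ENNReal.ofReal (p k))
    {v w : ℝ} (hv : v ∈ Set.Ioc (0 : ℝ) 1) (hw : w ∈ Set.Ioc (0 : ℝ) 1) (x : ℤ) :
    Psi P C v w x = (∑' c : RuinW x,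
      ENNReal.ofReal (v ^ (c : List ℕ).length *
        w ^ (-(pos x (c : List ℕ) (c : List ℕ).length))) * wt p c).toReal := by
  unfold Psi
  refine eind_eq_tsum P C hC p hindep hdist
    (val := fun c => v ^ c.length * w ^ (-(pos x c c.length)))
    ?_ ?_ (ruinW_disjoint C x subset_rfl) (ruin_event_eq C x) ?_
  · intro c hc
    exact mul_nonneg (pow_nonneg hv.1.le _) (zpow_pos hw.1 _).le
  · intro c hc
    calc v ^ c.length * w ^ (-(pos x c c.length))
        ≤ 1 * 1 := mul_le_mul (pow_le_one₀ hv.1.le hv.2) (zpow_le_one_aux hw.1 hw.2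
          (by have := hc.2; omega)) (zpow_pos hw.1 _).le zero_le_one
      _ = 1 := by ring
  · intro c hc ω hω
    have ht := tauMinus_on_cyl hc hω
    rw [ht]
    simp only [ENat.toNat_coe]
    rw [walk_on_cyl hω x le_rfl]

lemma tauPlus_on_cyl {C : ℕ → Ω → ℕ} {x y : ℤ} {c : List ℕ} (hc : c ∈ HitW x y) {ω : Ω}
    (hω : ω ∈ Cyl C c) : tauPlus C x y ω = c.length := by
  unfold tauPlus
  refine sInf_image_eq ?_ ?_
  · show y ≤ walk C x c.length ω
    rw [walk_on_cyl hω x le_rfl, hc.2]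
  · intro m hm
    show ¬ y ≤ walk C x m ω
    rw [walk_on_cyl hω x (le_of_lt hm)]
    have := (hc.1 m hm).2
    omega

lemma walk_succ_le (C : ℕ → Ω → ℕ) (x : ℤ) (n : ℕ) (ω : Ω) :
    walk C x (n + 1) ω ≤ walk C x n ω + 1 := by
  rw [walk_succ]
  have : (0 : ℤ) ≤ C n ω := Int.ofNat_nonneg _
  omega

lemma hit_event_eq (C : ℕ → Ω → ℕ) {y : ℤ} (hy : 0 ≤ y) :
    {ω | tauPlus C 0 y ω < tauMinus C 0 (-1) ω} = ⋃ c ∈ HitW 0 y, Cyl C c := by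
  ext ω
  simp only [Set.mem_setOf_eq, Set.mem_iUnion]
  constructor
  · intro h
    have htop : tauPlus C 0 y ω < ⊤ := lt_of_lt_of_le h le_top
    have hne : {n : ℕ | y ≤ walk C 0 n ω}.Nonempty := sInf_image_lt_top_iff.1 htop
    obtain ⟨n, hn, hmin⟩ := exists_least hne
    have htau : tauPlus C 0 y ω = n := sInf_image_eq hn hmin
    have hnoruin : ∀ m ≤ n, ¬ walk C 0 m ω ≤ -1 := by
      intro m hm hts
      have : tauMinus C 0 (-1) ω ≤ m := sInf_le ⟨m, hts, rfl⟩
      rw [htau] at h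
      have h2 : (m : ℕ∞) ≤ n := by exact_mod_cast hm
      exact absurd (lt_of_lt_of_le (lt_of_lt_of_le h this) h2) (by simp)
    have hend : walk C 0 n ω = y := by
      rcases n with _ | m
      · have h0 : walk C 0 0 ω = 0 := walk_zero C 0 ω
        simp only [Set.mem_setOf_eq] at hn
        omega
      · have h1 : ¬ y ≤ walk C 0 m ω := hmin m (Nat.lt_succ_self m)
        have h2 := walk_succ_le C 0 m ω
        simp only [Set.mem_setOf_eq] at hn h1
        omega
    have hcyl := mem_cyl_wrd C n ω
    have hpos : ∀ m ≤ n, pos 0 (wrd C n ω) m = walk C 0 m ω := fun m hm =>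
      (walk_on_cyl hcyl 0 (by rw [wrd_length]; exact hm)).symm
    refine ⟨wrd C n ω, ⟨⟨?_, ?_⟩, hcyl⟩⟩
    · intro m hm
      rw [wrd_length] at hm
      rw [hpos m (le_of_lt hm)]
      have h3 := hnoruin m (le_of_lt hm)
      have h4 := hmin m hm
      simp only [Set.mem_setOf_eq] at h4
      omega
    · rw [wrd_length, hpos n le_rfl]
      exact hend
  · rintro ⟨c, hc, hω⟩
    rw [tauPlus_on_cyl hc hω]
    unfold tauMinus
    refine lt_sInf_image ?_
    intro m hm
    show ¬ walk C 0 m ω ≤ -1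
    rw [walk_on_cyl hω 0 hm]
    rcases lt_or_eq_of_le hm with h | h
    · have := (hc.1 m h).1; omega
    · subst h; rw [hc.2]; omega

lemma hit_eind_eq_tsum (P : Measure Ω) [IsProbabilityMeasure P]
    (C : ℕ → Ω → ℕ) (hC : ∀ i, Measurable (C i)) (p : ℕ → ℝ)
    (hindep : ProbabilityTheory.iIndepFun C P)
    (hdist : ∀ i k, P {ω | C i ω = k} = ENNReal.ofReal (p k))
    {v : ℝ} (hv : v ∈ Set.Ioc (0 : ℝ) 1) {y : ℤ} (hy : 0 ≤ y) :
    Eind P {ω | tauPlus C 0 y ω < tauMinus C 0 (-1) ω}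
        (fun ω => v ^ (tauPlus C 0 y ω).toNat)
      = (∑' c : HitW 0 y, ENNReal.ofReal (v ^ (c : List ℕ).length) * wt p c).toReal := by
  refine eind_eq_tsum P C hC p hindep hdist
    (val := fun c => v ^ c.length)
    ?_ ?_ (hitW_disjoint C 0 y) (hit_event_eq C hy) ?_
  · intro c hc; exact pow_nonneg hv.1.le _
  · intro c hc; exact pow_le_one₀ hv.1.le hv.2
  · intro c hc ω hω
    rw [tauPlus_on_cyl hc hω]
    simp

lemma Truin_on_cyl {C : ℕ → Ω → ℕ} {x b : ℤ} (hx : x ≤ b) {c : List ℕ} (hc : c ∈ ReflW b x)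
    {ω : Ω} (hω : ω ∈ Cyl C c) : Truin C x b ω = c.length := by
  unfold Truin
  refine sInf_image_eq ?_ ?_
  · show walk C x c.length ω - Rdiv C x b c.length ω ≤ -1
    rw [tilde_on_cyl hx hω le_rfl]; exact hc.2
  · intro m hm
    show ¬ walk C x m ω - Rdiv C x b m ω ≤ -1
    rw [tilde_on_cyl hx hω (le_of_lt hm)]
    have := hc.1 m hm
    omega

lemma Truin_event_eq (C : ℕ → Ω → ℕ) {x b : ℤ} (hx : x ≤ b) :
    {ω | Truin C x b ω < ⊤} = ⋃ c ∈ ReflW b x, Cyl C c := by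
  ext ω
  simp only [Set.mem_setOf_eq, Set.mem_iUnion]
  constructor
  · intro h
    have hne : {n : ℕ | walk C x n ω - Rdiv C x b n ω ≤ -1}.Nonempty :=
      sInf_image_lt_top_iff.1 h
    obtain ⟨n, hn, hmin⟩ := exists_least hne
    have hcyl := mem_cyl_wrd C n ω
    have hpos : ∀ m ≤ n, tpos b x (wrd C n ω) m = walk C x m ω - Rdiv C x b m ω := fun m hm =>
      (tilde_on_cyl hx hcyl (by rw [wrd_length]; exact hm)).symm
    refine ⟨wrd C n ω, ⟨⟨?_, ?_⟩, hcyl⟩⟩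
    · intro m hm
      rw [wrd_length] at hm
      rw [hpos m (le_of_lt hm)]
      have := hmin m hm
      simp only [Set.mem_setOf_eq] at this
      omega
    · rw [wrd_length, hpos n le_rfl]
      exact hn
  · rintro ⟨c, hc, hω⟩
    rw [Truin_on_cyl hx hc hω]
    exact_mod_cast WithTop.coe_lt_top c.length

lemma refl_eind_eq_tsum (P : Measure Ω) [IsProbabilityMeasure P]
    (C : ℕ → Ω → ℕ) (hC : ∀ i, Measurable (C i)) (p : ℕ → ℝ)
    (hindep : ProbabilityTheory.iIndepFun C P)
    (hdist : ∀ i k, P {ω | C i ω = k} = ENNReal.ofReal (p k))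
    {v w z : ℝ} (hv : v ∈ Set.Ioc (0 : ℝ) 1) (hw : w ∈ Set.Ioc (0 : ℝ) 1)
    (hz : z ∈ Set.Ioc (0 : ℝ) 1) {x b : ℤ} (hx : x ≤ b) :
    Eind P {ω | Truin C x b ω < ⊤}
        (fun ω => v ^ (Truin C x b ω).toNat *
          w ^ (-(walk C x (Truin C x b ω).toNat ω - Rdiv C x b (Truin C x b ω).toNat ω)) *
          z ^ Rdiv C x b (Truin C x b ω).toNat ω)
      = (∑' c : ReflW b x, ENNReal.ofReal
          (v ^ (c : List ℕ).length * w ^ (-(tpos b x (c : List ℕ) (c : List ℕ).length)) *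
            z ^ (pos x (c : List ℕ) (c : List ℕ).length -
              tpos b x (c : List ℕ) (c : List ℕ).length)) * wt p c).toReal := by
  refine eind_eq_tsum P C hC p hindep hdist
    (val := fun c => v ^ c.length * w ^ (-(tpos b x c c.length)) *
      z ^ (pos x c c.length - tpos b x c c.length))
    ?_ ?_ (reflW_disjoint C b x) (Truin_event_eq C hx) ?_
  · intro c hc
    exact mul_nonneg (mul_nonneg (pow_nonneg hv.1.le _) (zpow_pos hw.1 _).le)
      (zpow_pos hz.1 _).le
  · intro c hc
    have h1 : v ^ c.length ≤ 1 := pow_le_one₀ hv.1.le hv.2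
    have h2 : w ^ (-(tpos b x c c.length)) ≤ 1 :=
      zpow_le_one_aux hw.1 hw.2 (by have := hc.2; omega)
    have h3 : z ^ (pos x c c.length - tpos b x c c.length) ≤ 1 :=
      zpow_le_one_aux hz.1 hz.2 (by have := tpos_le_pos b x c c.length; omega)
    calc v ^ c.length * w ^ (-(tpos b x c c.length)) *
          z ^ (pos x c c.length - tpos b x c c.length)
        ≤ 1 * 1 * 1 := by
          refine mul_le_mul (mul_le_mul h1 h2 (zpow_pos hw.1 _).le zero_le_one) h3
            (zpow_pos hz.1 _).le (by norm_num)
      _ = 1 := by ring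
  · intro c hc ω hω
    have ht := Truin_on_cyl hx hc hω
    rw [ht]
    simp only [ENat.toNat_coe]
    rw [tilde_on_cyl hx hω le_rfl, Rdiv_on_cyl hx hω le_rfl]

/-! ### Concatenation machinery -/

lemma tsum_concat {U V Wd : Set (List ℕ)} {f g h : List ℕ → ℝ≥0∞}
    (hmem : ∀ a ∈ U, ∀ d ∈ V, a ++ d ∈ Wd)
    (hsplit : ∀ c ∈ Wd, ∃ a d, a ∈ U ∧ d ∈ V ∧ a ++ d = c)
    (hlen : ∀ a ∈ U, ∀ a' ∈ U, ∀ d ∈ V, ∀ d' ∈ V, a ++ d = a' ++ d' → a.length = a'.length)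
    (hval : ∀ a ∈ U, ∀ d ∈ V, h (a ++ d) = f a * g d) :
    ∑' c : Wd, h c = (∑' a : U, f a) * (∑' d : V, g d) := by
  have huniq : ∀ a ∈ U, ∀ a' ∈ U, ∀ d ∈ V, ∀ d' ∈ V, a ++ d = a' ++ d' →
      a = a' ∧ d = d' := by
    intro a ha a' ha' d hd d' hd' heq
    have hl := hlen a ha a' ha' d hd d' hd' heq
    have ha'' : a = a' := by
      have h1 : (a ++ d).take a.length = a := List.take_left
      have h2 : (a' ++ d').take a.length = a' := List.take_left' hl.symm
      rw [← h1, ← h2, heq]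
    subst ha''
    exact ⟨rfl, List.append_cancel_left heq⟩
  let e : U × V → Wd := fun ad => ⟨ad.1.1 ++ ad.2.1, hmem _ ad.1.2 _ ad.2.2⟩
  have hbij : Function.Bijective e := by
    constructor
    · rintro ⟨⟨a, ha⟩, ⟨d, hd⟩⟩ ⟨⟨a', ha'⟩, ⟨d', hd'⟩⟩ hEq
      have heq : a ++ d = a' ++ d' := congrArg Subtype.val hEq
      obtain ⟨h1, h2⟩ := huniq a ha a' ha' d hd d' hd' heq
      simp only [Prod.ext_iff, Subtype.ext_iff]
      exact ⟨h1, h2⟩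
    · rintro ⟨c, hc⟩
      obtain ⟨a, d, ha, hd, heq⟩ := hsplit c hc
      exact ⟨⟨⟨a, ha⟩, ⟨d, hd⟩⟩, Subtype.ext heq⟩
  have h1 : ∑' c : Wd, h c = ∑' ad : U × V, h (e ad) :=
    ((Equiv.ofBijective e hbij).tsum_eq fun c : Wd => h (c : List ℕ)).symm
  rw [h1]
  have h2 : ∀ ad : U × V, h ((e ad : List ℕ)) = f ad.1 * g ad.2 := by
    rintro ⟨⟨a, ha⟩, ⟨d, hd⟩⟩
    exact hval a ha d hd
  rw [tsum_congr h2, ENNReal.tsum_prod']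
  calc ∑' (a : U) (d : V), f (a : List ℕ) * g (d : List ℕ)
      = ∑' a : U, f (a : List ℕ) * ∑' d : V, g (d : List ℕ) :=
        tsum_congr fun a => ENNReal.tsum_mul_left
    _ = _ := ENNReal.tsum_mul_right

lemma pos_first_hit {x y : ℤ} {c : List ℕ} {m0 : ℕ} (hm0 : y ≤ pos x c m0)
    (hmin : ∀ m < m0, pos x c m < y) (hx : x ≤ y) : pos x c m0 = y := by
  cases m0 with
  | zero => rw [pos_zero] at hm0 ⊢; omega
  | succ m =>
      have h1 := hmin m (Nat.lt_succ_self m)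
      have h2 := pos_succ_le x c m
      omega

lemma hitfirst_len {x B : ℤ} {a d a' d' : List ℕ} (ha : a ∈ HitW x B) (ha' : a' ∈ HitW x B)
    (heq : a ++ d = a' ++ d') : a.length = a'.length := by
  rcases lt_trichotomy a.length a'.length with hl | hl | hl
  · exfalso
    have h1 : pos x (a' ++ d') a.length = pos x a' a.length := pos_append x a' d' hl.le
    have h2 : pos x (a ++ d) a.length = pos x a a.length := pos_append x a d le_rfl
    rw [heq] at h2
    have h3 := (ha'.1 a.length hl).2
    have h4 := ha.2
    omega
  · exact hl
  · exfalso
    have h1 : pos x (a ++ d) a'.length = pos x a a'.length := pos_append x a d hl.le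
    have h2 : pos x (a' ++ d') a'.length = pos x a' a'.length := pos_append x a' d' le_rfl
    rw [heq] at h1
    have h3 := (ha.1 a'.length hl).2
    have h4 := ha'.2
    omega

lemma tpos_succ_eq {b x : ℤ} {c : List ℕ} {m : ℕ} (h : tpos b x c m = pos x c m) :
    tpos b x c (m + 1) = min (pos x c (m + 1)) b := by
  show min (tpos b x c m + 1 - c.getD m 0) b = _
  rw [h, pos_succ]

/-! #### Splitting `HitW` at an intermediate level -/

lemma hit_append {x y T : ℤ} (hyT : y < T) {a d : List ℕ}
    (ha : a ∈ HitW x y) (hd : d ∈ HitW y T) : a ++ d ∈ HitW x T := by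
  constructor
  · intro m hm
    rw [List.length_append] at hm
    rcases Nat.lt_or_ge m a.length with h | h
    · rw [pos_append x a d h.le]
      have h1 := (ha.1 m h).1
      have h2 := (ha.1 m h).2
      constructor <;> omega
    · obtain ⟨j, rfl⟩ : ∃ j, m = a.length + j := ⟨m - a.length, by omega⟩
      rw [pos_append_right, ha.2]
      exact hd.1 j (by omega)
  · rw [List.length_append, pos_append_right, ha.2]
    exact hd.2

lemma hit_split_exists {x y T : ℤ} (hxy : x ≤ y) (hyT : y < T) {c : List ℕ}
    (hc : c ∈ HitW x T) : ∃ a d, a ∈ HitW x y ∧ d ∈ HitW y T ∧ a ++ d = c := by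
  have hS : c.length ∈ {m : ℕ | y ≤ pos x c m} := by
    show y ≤ pos x c c.length
    rw [hc.2]; exact hyT.le
  obtain ⟨m0, hm0, hmin⟩ := exists_least ⟨c.length, hS⟩
  have hminlt : ∀ m < m0, pos x c m < y := fun m hm => not_le.1 (hmin m hm)
  have hm0le : m0 ≤ c.length := by
    by_contra h
    exact hmin c.length (by omega) hS
  have hposm0 : pos x c m0 = y := pos_first_hit hm0 hminlt hxy
  have hm0lt : m0 < c.length := by
    rcases lt_or_eq_of_le hm0le with h | h
    · exact h
    · exfalso; rw [h, hc.2] at hposm0; omega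
  set a := c.take m0 with hadef
  set d := c.drop m0 with hddef
  have heq : a ++ d = c := List.take_append_drop m0 c
  have hlena : a.length = m0 := by rw [hadef, List.length_take]; omega
  have hlend : d.length = c.length - m0 := by rw [hddef, List.length_drop]
  have hpa : ∀ m ≤ m0, pos x a m = pos x c m := by
    intro m hm
    conv_rhs => rw [← heq]
    exact (pos_append x a d (by omega)).symm
  have hpd : ∀ j, pos y d j = pos x c (m0 + j) := by
    intro j
    conv_rhs => rw [← heq]
    rw [show m0 + j = a.length + j by omega, pos_append_right, hlena, hpa m0 le_rfl, hposm0]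
  refine ⟨a, d, ⟨?_, ?_⟩, ⟨?_, ?_⟩, heq⟩
  · intro m hm
    rw [hlena] at hm
    rw [hpa m hm.le]
    exact ⟨(hc.1 m (by omega)).1, hminlt m hm⟩
  · rw [hlena, hpa m0 le_rfl, hposm0]
  · intro j hj
    rw [hlend] at hj
    rw [hpd j]
    exact hc.1 (m0 + j) (by omega)
  · rw [hpd d.length, show m0 + d.length = c.length by omega]
    exact hc.2

/-! #### Splitting ruin words at the first passage above the barrier -/

lemma ruin_append {x b : ℤ} (hb : 0 ≤ b) {a d : List ℕ}
    (ha : a ∈ HitW x (b + 1)) (hd : d ∈ RuinW (b + 1)) :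
    a ++ d ∈ RuinW x \ LowW b x := by
  constructor
  · constructor
    · intro m hm
      rw [List.length_append] at hm
      rcases Nat.lt_or_ge m a.length with h | h
      · rw [pos_append x a d h.le]
        exact (ha.1 m h).1
      · obtain ⟨j, rfl⟩ : ∃ j, m = a.length + j := ⟨m - a.length, by omega⟩
        rw [pos_append_right, ha.2]
        exact hd.1 j (by omega)
    · rw [List.length_append, pos_append_right, ha.2]
      exact hd.2
  · intro hlow
    have h1 := hlow a.length (by rw [List.length_append]; omega)
    rw [pos_append x a d le_rfl, ha.2] at h1
    omega

lemma ruin_split_exists {x b : ℤ} (hb : 0 ≤ b) (hxb : x ≤ b) {c : List ℕ}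
    (hc : c ∈ RuinW x \ LowW b x) :
    ∃ a d, a ∈ HitW x (b + 1) ∧ d ∈ RuinW (b + 1) ∧ a ++ d = c := by
  obtain ⟨hcr, hclow⟩ := hc
  have hex : ∃ m, m ∈ {m : ℕ | b + 1 ≤ pos x c m} ∧ m ≤ c.length := by
    by_contra h
    push_neg at h
    exact hclow fun m hm => by
      by_contra h2
      exact absurd (h m (by omega : b + 1 ≤ pos x c m)) (by omega)
  obtain ⟨mw, hmw, hmwle⟩ := hex
  obtain ⟨m0, hm0, hmin⟩ := exists_least ⟨mw, hmw⟩
  have hminlt : ∀ m < m0, pos x c m < b + 1 := fun m hm => not_le.1 (hmin m hm)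
  have hm0le : m0 ≤ c.length := by
    by_contra h
    exact hmin mw (by omega) hmw
  have hposm0 : pos x c m0 = b + 1 := pos_first_hit hm0 hminlt (by omega)
  have hm0lt : m0 < c.length := by
    rcases lt_or_eq_of_le hm0le with h | h
    · exact h
    · exfalso
      have := hcr.2
      rw [← h, hposm0] at this
      omega
  set a := c.take m0 with hadef
  set d := c.drop m0 with hddef
  have heq : a ++ d = c := List.take_append_drop m0 c
  have hlena : a.length = m0 := by rw [hadef, List.length_take]; omega
  have hlend : d.length = c.length - m0 := by rw [hddef, List.length_drop]
  have hpa : ∀ m ≤ m0, pos x a m = pos x c m := by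
    intro m hm
    conv_rhs => rw [← heq]
    exact (pos_append x a d (by omega)).symm
  have hpd : ∀ j, pos (b + 1) d j = pos x c (m0 + j) := by
    intro j
    conv_rhs => rw [← heq]
    rw [show m0 + j = a.length + j by omega, pos_append_right, hlena, hpa m0 le_rfl, hposm0]
  refine ⟨a, d, ⟨?_, ?_⟩, ⟨?_, ?_⟩, heq⟩
  · intro m hm
    rw [hlena] at hm
    rw [hpa m hm.le]
    exact ⟨hcr.1 m (by omega), hminlt m hm⟩
  · rw [hlena, hpa m0 le_rfl, hposm0]
  · intro j hj
    rw [hlend] at hj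
    rw [hpd j]
    exact hcr.1 (m0 + j) (by omega)
  · rw [hpd d.length, show m0 + d.length = c.length by omega]
    exact hcr.2

/-! #### Splitting reflected ruin words at the first passage above the barrier -/

lemma refl_append {x b : ℤ} (hb : 0 ≤ b) (hxb : x ≤ b) {a d : List ℕ}
    (ha : a ∈ HitW x (b + 1)) (hd : d ∈ ReflW b b) :
    a ++ d ∈ ReflW b x \ LowW b x := by
  have htp : ∀ m ≤ a.length, m < a.length → tpos b x (a ++ d) m = pos x (a ++ d) m := by
    intro m _ hm
    refine tpos_eq_pos fun m' hm' => ?_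
    rw [pos_append x a d (by omega)]
    have := (ha.1 m' (by omega)).2
    omega
  have hlenapos : 0 < a.length := by
    rcases Nat.eq_zero_or_pos a.length with h | h
    · exfalso
      have := ha.2
      rw [h, pos_zero] at this
      omega
    · exact h
  have htpa : tpos b x (a ++ d) a.length = b := by
    obtain ⟨m, hm⟩ : ∃ m, a.length = m + 1 := ⟨a.length - 1, by omega⟩
    rw [hm]
    rw [tpos_succ_eq (by
      refine tpos_eq_pos fun m' hm' => ?_
      rw [pos_append x a d (by omega)]
      have := (ha.1 m' (by omega)).2
      omega)]
    rw [← hm, pos_append x a d le_rfl, ha.2]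
    omega
  have htpd : ∀ j, tpos b x (a ++ d) (a.length + j) = tpos b b d j := by
    intro j
    rw [tpos_append_right, htpa]
  constructor
  · constructor
    · intro m hm
      rw [List.length_append] at hm
      rcases Nat.lt_or_ge m a.length with h | h
      · rw [htp m h.le h, pos_append x a d h.le]
        exact (ha.1 m h).1
      · obtain ⟨j, rfl⟩ : ∃ j, m = a.length + j := ⟨m - a.length, by omega⟩
        rcases Nat.eq_zero_or_pos d.length with h0 | h0
        · exfalso
          have := hd.2
          rw [h0] at this
          have h2 : tpos b b d 0 = b := rfl
          rw [h2] at this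
          omega
        · rw [htpd j]
          exact hd.1 j (by omega)
    · rw [List.length_append, htpd d.length]
      exact hd.2
  · intro hlow
    have h1 := hlow a.length (by rw [List.length_append]; omega)
    rw [pos_append x a d le_rfl, ha.2] at h1
    omega

lemma refl_split_exists {x b : ℤ} (hb : 0 ≤ b) (hxb : x ≤ b) {c : List ℕ}
    (hc : c ∈ ReflW b x \ LowW b x) :
    ∃ a d, a ∈ HitW x (b + 1) ∧ d ∈ ReflW b b ∧ a ++ d = c := by
  obtain ⟨hcr, hclow⟩ := hc
  have hex : ∃ m, m ∈ {m : ℕ | b + 1 ≤ pos x c m} ∧ m ≤ c.length := by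
    by_contra h
    push_neg at h
    exact hclow fun m hm => by
      by_contra h2
      exact absurd (h m (by omega : b + 1 ≤ pos x c m)) (by omega)
  obtain ⟨mw, hmw, hmwle⟩ := hex
  obtain ⟨m0, hm0, hmin⟩ := exists_least ⟨mw, hmw⟩
  have hminlt : ∀ m < m0, pos x c m < b + 1 := fun m hm => not_le.1 (hmin m hm)
  have hm0le : m0 ≤ c.length := by
    by_contra h
    exact hmin mw (by omega) hmw
  have hposm0 : pos x c m0 = b + 1 := pos_first_hit hm0 hminlt (by omega)
  have htp : ∀ m < m0, tpos b x c m = pos x c m := by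
    intro m hm
    refine tpos_eq_pos fun m' hm' => ?_
    have := hminlt m' (by omega)
    omega
  have hm0pos : 0 < m0 := by
    rcases Nat.eq_zero_or_pos m0 with h | h
    · exfalso; rw [h, pos_zero] at hposm0; omega
    · exact h
  have htpm0 : tpos b x c m0 = b := by
    obtain ⟨m, hm⟩ : ∃ m, m0 = m + 1 := ⟨m0 - 1, by omega⟩
    rw [hm, tpos_succ_eq (htp m (by omega)), ← hm, hposm0]
    omega
  have hm0lt : m0 < c.length := by
    rcases lt_or_eq_of_le hm0le with h | h
    · exact h
    · exfalso
      have := hcr.2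
      rw [← h, htpm0] at this
      omega
  set a := c.take m0 with hadef
  set d := c.drop m0 with hddef
  have heq : a ++ d = c := List.take_append_drop m0 c
  have hlena : a.length = m0 := by rw [hadef, List.length_take]; omega
  have hlend : d.length = c.length - m0 := by rw [hddef, List.length_drop]
  have hpa : ∀ m ≤ m0, pos x a m = pos x c m := by
    intro m hm
    conv_rhs => rw [← heq]
    exact (pos_append x a d (by omega)).symm
  have htpd : ∀ j, tpos b b d j = tpos b x c (m0 + j) := by
    intro j
    have h1 := tpos_append_right b x a d j
    rw [heq, hlena, htpm0] at h1
    exact h1.symm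
  refine ⟨a, d, ⟨?_, ?_⟩, ⟨?_, ?_⟩, heq⟩
  · intro m hm
    rw [hlena] at hm
    rw [hpa m hm.le]
    have h1 := hcr.1 m (by omega)
    rw [htp m hm] at h1
    exact ⟨h1, hminlt m hm⟩
  · rw [hlena, hpa m0 le_rfl, hposm0]
  · intro j hj
    rw [hlend] at hj
    rw [htpd j]
    exact hcr.1 (m0 + j) (by omega)
  · rw [htpd d.length, show m0 + d.length = c.length by omega]
    exact hcr.2

/-! ### The three `tsum` decomposition identities -/

def hitTerm (p : ℕ → ℝ) (v : ℝ) (c : List ℕ) : ℝ≥0∞ :=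
  ENNReal.ofReal (v ^ c.length) * wt p c

def ruinTerm (p : ℕ → ℝ) (v w : ℝ) (x : ℤ) (c : List ℕ) : ℝ≥0∞ :=
  ENNReal.ofReal (v ^ c.length * w ^ (-(pos x c c.length))) * wt p c

def reflTerm (p : ℕ → ℝ) (v w z : ℝ) (b x : ℤ) (c : List ℕ) : ℝ≥0∞ :=
  ENNReal.ofReal (v ^ c.length * w ^ (-(tpos b x c c.length)) *
    z ^ (pos x c c.length - tpos b x c c.length)) * wt p c

lemma hitTerm_append {p : ℕ → ℝ} {v : ℝ} (hv : 0 ≤ v) (a d : List ℕ) :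
    hitTerm p v (a ++ d) = hitTerm p v a * hitTerm p v d := by
  unfold hitTerm
  rw [wt_append, List.length_append, pow_add, ENNReal.ofReal_mul (pow_nonneg hv _)]
  ring

lemma ruinTerm_append {p : ℕ → ℝ} {v w : ℝ} (hv : 0 ≤ v) {x b : ℤ} {a d : List ℕ}
    (ha : pos x a a.length = b + 1) :
    ruinTerm p v w x (a ++ d) = hitTerm p v a * ruinTerm p v w (b + 1) d := by
  unfold ruinTerm hitTerm
  have hpos : pos x (a ++ d) (a ++ d).length = pos (b + 1) d d.length := by
    rw [List.length_append, pos_append_right, ha]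
  rw [hpos, wt_append, List.length_append, pow_add, mul_assoc,
    ENNReal.ofReal_mul (pow_nonneg hv _)]
  ring

lemma tpos_at_hit {x b : ℤ} (hxb : x ≤ b) {a : List ℕ} (d : List ℕ)
    (ha : a ∈ HitW x (b + 1)) : tpos b x (a ++ d) a.length = b := by
  have hlenapos : 0 < a.length := by
    rcases Nat.eq_zero_or_pos a.length with h | h
    · exfalso
      have := ha.2
      rw [h, pos_zero] at this
      omega
    · exact h
  obtain ⟨m, hm⟩ : ∃ m, a.length = m + 1 := ⟨a.length - 1, by omega⟩
  rw [hm]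
  rw [tpos_succ_eq (by
    refine tpos_eq_pos fun m' hm' => ?_
    rw [pos_append x a d (by omega)]
    have := (ha.1 m' (by omega)).2
    omega)]
  rw [← hm, pos_append x a d le_rfl, ha.2]
  omega

lemma reflTerm_append {p : ℕ → ℝ} {v w z : ℝ} (hv : 0 ≤ v) (hz0 : 0 < z) {x b : ℤ}
    (hxb : x ≤ b) {a d : List ℕ} (ha : a ∈ HitW x (b + 1)) :
    reflTerm p v w z b x (a ++ d)
      = hitTerm p v a * (ENNReal.ofReal z * reflTerm p v w z b b d) := by
  unfold reflTerm hitTerm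
  have htpa := tpos_at_hit hxb d ha
  have htp : tpos b x (a ++ d) (a ++ d).length = tpos b b d d.length := by
    rw [List.length_append, tpos_append_right, htpa]
  have hpos : pos x (a ++ d) (a ++ d).length = pos b d d.length + 1 := by
    rw [List.length_append, pos_append_right, ha.2]
    rw [show (b : ℤ) + 1 = b + 1 from rfl, pos_shift b 1 d d.length]
  have hexp : pos x (a ++ d) (a ++ d).length - tpos b x (a ++ d) (a ++ d).length
      = (pos b d d.length - tpos b b d d.length) + 1 := by
    rw [htp, hpos]; ring
  rw [hexp, htp, zpow_add_one₀ (ne_of_gt hz0), wt_append, List.length_append, pow_add]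
  rw [show v ^ a.length * v ^ d.length * w ^ (-tpos b b d d.length) *
      (z ^ (pos b d d.length - tpos b b d d.length) * z)
    = v ^ a.length * (z * (v ^ d.length * w ^ (-tpos b b d d.length) *
      z ^ (pos b d d.length - tpos b b d d.length))) by ring]
  rw [ENNReal.ofReal_mul (pow_nonneg hv _), ENNReal.ofReal_mul hz0.le]
  ring

lemma tsum_split_low (W L : Set (List ℕ)) (F : List ℕ → ℝ≥0∞) :
    ∑' c : W, F c = (∑' c : ↥(W ∩ L), F c) + ∑' c : ↥(W \ L), F c := by
  have hset : (W ∩ L) ∪ (W \ L) = W := Set.inter_union_diff W L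
  have hdisj : Disjoint (W ∩ L) (W \ L) := by
    rw [Set.disjoint_left]
    rintro c ⟨hcW, hcL⟩ ⟨hcW', hcL'⟩
    exact hcL' hcL
  calc ∑' c : W, F c = ∑' c : ↥((W ∩ L) ∪ (W \ L)), F c := by rw [hset]
    _ = _ := Summable.tsum_union_disjoint hdisj ENNReal.summable ENNReal.summable

lemma hit_tsum_split {p : ℕ → ℝ} {v : ℝ} (hv : 0 ≤ v) {x y T : ℤ} (hxy : x ≤ y) (hyT : y < T) :
    ∑' c : HitW x T, hitTerm p v c
      = (∑' c : HitW x y, hitTerm p v c) * ∑' c : HitW y T, hitTerm p v c :=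
  tsum_concat (fun _ ha _ hd => hit_append hyT ha hd)
    (fun _ hc => hit_split_exists hxy hyT hc)
    (fun _ ha _ ha' _ _ _ _ heq => hitfirst_len ha ha' heq)
    (fun a _ d _ => hitTerm_append hv a d)

lemma ruin_tsum_split {p : ℕ → ℝ} {v w : ℝ} (hv : 0 ≤ v) {x b : ℤ} (hb : 0 ≤ b)
    (hxb : x ≤ b) :
    ∑' c : RuinW x, ruinTerm p v w x c
      = (∑' c : ↥(RuinW x ∩ LowW b x), ruinTerm p v w x c)
        + (∑' c : HitW x (b + 1), hitTerm p v c)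
          * ∑' c : RuinW (b + 1), ruinTerm p v w (b + 1) c := by
  rw [tsum_split_low (RuinW x) (LowW b x) (ruinTerm p v w x)]
  congr 1
  exact tsum_concat (fun _ ha _ hd => ruin_append hb ha hd)
    (fun _ hc => ruin_split_exists hb hxb hc)
    (fun _ ha _ ha' _ _ _ _ heq => hitfirst_len ha ha' heq)
    (fun _ ha _ _ => ruinTerm_append hv ha.2)

lemma low_refl_eq_ruin {x b : ℤ} : ReflW b x ∩ LowW b x = RuinW x ∩ LowW b x := by
  ext c
  constructor
  · rintro ⟨hr, hl⟩
    have ht : ∀ m ≤ c.length, tpos b x c m = pos x c m := fun m hm =>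
      tpos_eq_pos fun m' hm' => hl m' (by omega)
    refine ⟨⟨fun m hm => ?_, ?_⟩, hl⟩
    · rw [← ht m hm.le]; exact hr.1 m hm
    · rw [← ht c.length le_rfl]; exact hr.2
  · rintro ⟨hr, hl⟩
    have ht : ∀ m ≤ c.length, tpos b x c m = pos x c m := fun m hm =>
      tpos_eq_pos fun m' hm' => hl m' (by omega)
    refine ⟨⟨fun m hm => ?_, ?_⟩, hl⟩
    · rw [ht m hm.le]; exact hr.1 m hm
    · rw [ht c.length le_rfl]; exact hr.2

lemma reflTerm_eq_ruinTerm_on_low {p : ℕ → ℝ} {v w z : ℝ} {x b : ℤ} {c : List ℕ}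
    (hc : c ∈ LowW b x) : reflTerm p v w z b x c = ruinTerm p v w x c := by
  have ht : tpos b x c c.length = pos x c c.length :=
    tpos_eq_pos fun m' hm' => hc m' hm'
  unfold reflTerm ruinTerm
  rw [ht, sub_self, zpow_zero, mul_one]

lemma refl_tsum_split {p : ℕ → ℝ} {v w z : ℝ} (hv : 0 ≤ v) (hz0 : 0 < z) {x b : ℤ}
    (hb : 0 ≤ b) (hxb : x ≤ b) :
    ∑' c : ReflW b x, reflTerm p v w z b x c
      = (∑' c : ↥(RuinW x ∩ LowW b x), ruinTerm p v w x c)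
        + (∑' c : HitW x (b + 1), hitTerm p v c)
          * (ENNReal.ofReal z * ∑' c : ReflW b b, reflTerm p v w z b b c) := by
  rw [tsum_split_low (ReflW b x) (LowW b x) (reflTerm p v w z b x)]
  congr 1
  · rw [low_refl_eq_ruin]
    exact tsum_congr fun c => reflTerm_eq_ruinTerm_on_low c.2.2
  · rw [← ENNReal.tsum_mul_left]
    exact tsum_concat (fun _ ha _ hd => refl_append hb hxb ha hd)
      (fun _ hc => refl_split_exists hb hxb hc)
      (fun _ ha _ ha' _ _ _ _ heq => hitfirst_len ha ha' heq)
      (fun _ ha _ _ => reflTerm_append hv hz0 hxb ha)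

/-! ### Bounds and positivity -/

lemma getD_replicate_zero (n i : ℕ) : (List.replicate n (0 : ℕ)).getD i 0 = 0 := by
  rcases Nat.lt_or_ge i n with h | h
  · rw [List.getD_eq_getElem _ _ (by simpa using h)]
    simp
  · rw [List.getD_eq_default _ _ (by simpa using h)]

lemma replicate_mem_hitW {x y : ℤ} (hx : 0 ≤ x) (hxy : x ≤ y) :
    List.replicate (y - x).toNat 0 ∈ HitW x y := by
  have hpos : ∀ m, pos x (List.replicate (y - x).toNat 0) m = x + m := by
    intro m
    unfold pos
    rw [Finset.sum_eq_zero fun i _ => by rw [getD_replicate_zero]; rfl]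
    ring
  constructor
  · intro m hm
    rw [List.length_replicate] at hm
    rw [hpos]
    constructor <;> omega
  · rw [List.length_replicate, hpos]
    omega

lemma hitTerm_pos {p : ℕ → ℝ} {v : ℝ} (hv : 0 < v) (hp0 : 0 < p 0) (n : ℕ) :
    0 < hitTerm p v (List.replicate n 0) := by
  unfold hitTerm
  refine ENNReal.mul_pos ?_ ?_
  · exact (ENNReal.ofReal_pos.2 (pow_pos hv _)).ne'
  · unfold wt
    refine (Finset.prod_ne_zero_iff.2 fun i _ => ?_)
    rw [getD_replicate_zero]
    exact (ENNReal.ofReal_pos.2 hp0).ne'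

lemma hit_tsum_pos {p : ℕ → ℝ} {v : ℝ} (hv : 0 < v) (hp0 : 0 < p 0) {x y : ℤ}
    (hx : 0 ≤ x) (hxy : x ≤ y) : 0 < ∑' c : HitW x y, hitTerm p v c :=
  lt_of_lt_of_le (hitTerm_pos hv hp0 (y - x).toNat)
    (ENNReal.le_tsum (⟨List.replicate (y - x).toNat 0, replicate_mem_hitW hx hxy⟩ :
      HitW x y))

variable (P : Measure Ω) [IsProbabilityMeasure P] in
lemma hit_tsum_le_one (C : ℕ → Ω → ℕ) (hC : ∀ i, Measurable (C i)) (p : ℕ → ℝ)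
    (hindep : ProbabilityTheory.iIndepFun C P)
    (hdist : ∀ i k, P {ω | C i ω = k} = ENNReal.ofReal (p k)) {v : ℝ} (hv : v ∈ Set.Ioc (0 : ℝ) 1) (x y : ℤ) :
    ∑' c : HitW x y, hitTerm p v c ≤ 1 :=
  tsum_val_le_one P C hC p hindep hdist (val := fun c => v ^ c.length)
    (fun c _ => pow_le_one₀ hv.1.le hv.2) (hitW_disjoint C x y)

variable (P : Measure Ω) [IsProbabilityMeasure P] in
lemma ruin_tsum_le_one (C : ℕ → Ω → ℕ) (hC : ∀ i, Measurable (C i)) (p : ℕ → ℝ)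
    (hindep : ProbabilityTheory.iIndepFun C P)
    (hdist : ∀ i k, P {ω | C i ω = k} = ENNReal.ofReal (p k)) {v w : ℝ} (hv : v ∈ Set.Ioc (0 : ℝ) 1) (hw : w ∈ Set.Ioc (0 : ℝ) 1)
    (x : ℤ) : ∑' c : RuinW x, ruinTerm p v w x c ≤ 1 :=
  tsum_val_le_one P C hC p hindep hdist
    (val := fun c => v ^ c.length * w ^ (-(pos x c c.length)))
    (fun c hc => by
      calc v ^ c.length * w ^ (-(pos x c c.length))
          ≤ 1 * 1 := mul_le_mul (pow_le_one₀ hv.1.le hv.2) (zpow_le_one_aux hw.1 hw.2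
            (by have := hc.2; omega)) (zpow_pos hw.1 _).le zero_le_one
        _ = 1 := by ring)
    (ruinW_disjoint C x subset_rfl)

variable (P : Measure Ω) [IsProbabilityMeasure P] in
lemma refl_tsum_le_one (C : ℕ → Ω → ℕ) (hC : ∀ i, Measurable (C i)) (p : ℕ → ℝ)
    (hindep : ProbabilityTheory.iIndepFun C P)
    (hdist : ∀ i k, P {ω | C i ω = k} = ENNReal.ofReal (p k)) {v w z : ℝ} (hv : v ∈ Set.Ioc (0 : ℝ) 1) (hw : w ∈ Set.Ioc (0 : ℝ) 1)
    (hz : z ∈ Set.Ioc (0 : ℝ) 1) (b x : ℤ) :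
    ∑' c : ReflW b x, reflTerm p v w z b x c ≤ 1 :=
  tsum_val_le_one P C hC p hindep hdist
    (val := fun c => v ^ c.length * w ^ (-(tpos b x c c.length)) *
      z ^ (pos x c c.length - tpos b x c c.length))
    (fun c hc => by
      have h1 : v ^ c.length ≤ 1 := pow_le_one₀ hv.1.le hv.2
      have h2 : w ^ (-(tpos b x c c.length)) ≤ 1 :=
        zpow_le_one_aux hw.1 hw.2 (by have := hc.2; omega)
      have h3 : z ^ (pos x c c.length - tpos b x c c.length) ≤ 1 :=
        zpow_le_one_aux hz.1 hz.2 (by have := tpos_le_pos b x c c.length; omega)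
      calc v ^ c.length * w ^ (-(tpos b x c c.length)) *
            z ^ (pos x c c.length - tpos b x c c.length)
          ≤ 1 * 1 * 1 := by
            refine mul_le_mul (mul_le_mul h1 h2 (zpow_pos hw.1 _).le zero_le_one) h3
              (zpow_pos hz.1 _).le (by norm_num)
        _ = 1 := by ring)
    (reflW_disjoint C b x)

/-- Strict bound at the barrier: `z · B̂_b < 1`. -/
lemma zBb_lt_one (P : Measure Ω) [IsProbabilityMeasure P]
    (C : ℕ → Ω → ℕ) (hC : ∀ i, Measurable (C i)) {p : ℕ → ℝ}
    (hindep : ProbabilityTheory.iIndepFun C P)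
    (hdist : ∀ i k, P {ω | C i ω = k} = ENNReal.ofReal (p k))
    {v z : ℝ} (hv : v ∈ Set.Ioc (0 : ℝ) 1)
    (hz : z ∈ Set.Ioc (0 : ℝ) 1) (hnn : ∀ k, 0 ≤ p k) (hsum : ∑' k, p k = 1)
    (hdeg : min (p 0 + p 1) v < 1) {b : ℤ} (hb : 0 ≤ b) :
    ENNReal.ofReal z * ∑' c : HitW b (b + 1), hitTerm p v c < 1 := by
  have hz1 : ENNReal.ofReal z ≤ 1 := ENNReal.ofReal_le_one.2 hz.2
  have hwt_le : ∑' c : HitW b (b + 1), wt p (c : List ℕ) ≤ 1 :=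
    tsum_wt_le_one P C hC p hindep hdist (hitW_disjoint C b (b + 1))
  rcases min_lt_iff.1 hdeg with hp01 | hv1
  · -- case `p 0 + p 1 < 1`
    have hBb_le : ∑' c : HitW b (b + 1), hitTerm p v c
        ≤ ∑' c : HitW b (b + 1), wt p (c : List ℕ) := by
      refine ENNReal.tsum_le_tsum fun c => ?_
      unfold hitTerm
      exact mul_le_of_le_one_left zero_le
        (ENNReal.ofReal_le_one.2 (pow_le_one₀ hv.1.le hv.2))
    have hsble : Summable p := by
      by_contra h
      rw [tsum_eq_zero_of_not_summable h] at hsum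
      norm_num at hsum
    have hple : p 0 + p 1 ≤ 1 := by
      have h2 : ∑ i ∈ Finset.range 2, p i ≤ ∑' k, p k :=
        Summable.sum_le_tsum (Finset.range 2) (fun a _ => hnn a) hsble
      rw [hsum] at h2
      simpa [Finset.sum_range_succ] using h2
    set N := b.toNat + 1 with hN
    have hmeasE : MeasurableSet (⋂ i ∈ Finset.range N, (C i) ⁻¹' {k : ℕ | 2 ≤ k}) :=
      MeasurableSet.biInter (Finset.range N).countable_toSet
        fun i _ => (hC i) ((Set.to_countable _).measurableSet)
    have hfactor : ∀ i : ℕ, P ((C i) ⁻¹' {k : ℕ | 2 ≤ k}) = ENNReal.ofReal (1 - p 0 - p 1) := by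
      intro i
      have hsplit : (C i) ⁻¹' {k : ℕ | 2 ≤ k} = ({ω | C i ω = 0} ∪ {ω | C i ω = 1})ᶜ := by
        ext ω
        simp only [Set.mem_preimage, Set.mem_setOf_eq, Set.mem_compl_iff, Set.mem_union]
        omega
      have hm0 : MeasurableSet {ω | C i ω = 0} := (hC i) (measurableSet_singleton 0)
      have hm1 : MeasurableSet {ω | C i ω = 1} := (hC i) (measurableSet_singleton 1)
      have hdisj01 : Disjoint {ω | C i ω = 0} {ω | C i ω = 1} := by
        rw [Set.disjoint_left]
        intro ω h0 h1
        simp only [Set.mem_setOf_eq] at h0 h1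
        omega
      rw [hsplit, measure_compl (hm0.union hm1) (measure_ne_top P _),
        measure_union hdisj01 hm1, hdist i 0, hdist i 1, measure_univ,
        ← ENNReal.ofReal_add (hnn 0) (hnn 1),
        show (1 : ℝ≥0∞) = ENNReal.ofReal 1 by simp,
        ← ENNReal.ofReal_sub 1 (add_nonneg (hnn 0) (hnn 1))]
      congr 1
      ring
    have hPE : P (⋂ i ∈ Finset.range N, (C i) ⁻¹' {k : ℕ | 2 ≤ k})
        = ENNReal.ofReal (1 - p 0 - p 1) ^ N := by
      rw [hindep.measure_inter_preimage_eq_mul (Finset.range N)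
        (sets := fun _ => {k : ℕ | 2 ≤ k}) (fun i _ => (Set.to_countable _).measurableSet)]
      rw [Finset.prod_congr rfl fun i _ => hfactor i, Finset.prod_const,
        Finset.card_range]
    have hPEpos : 0 < P (⋂ i ∈ Finset.range N, (C i) ⁻¹' {k : ℕ | 2 ≤ k}) := by
      rw [hPE]
      exact ENNReal.pow_pos (ENNReal.ofReal_pos.2 (by linarith)) N
    have hdisjE : ∀ c ∈ HitW b (b + 1),
        Disjoint (Cyl C c) (⋂ i ∈ Finset.range N, (C i) ⁻¹' {k : ℕ | 2 ≤ k}) := by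
      intro c hc
      rw [Set.disjoint_left]
      intro ω hω hωE
      have hbig : ∀ i < N, 2 ≤ C i ω := by
        intro i hi
        have := Set.mem_iInter₂.1 hωE i (Finset.mem_range.2 hi)
        simpa using this
      have key : ∀ m, m ≤ c.length → m ≤ N → pos b c m ≤ b - m := by
        intro m
        induction m with
        | zero => intro _ _; rw [pos_zero]; omega
        | succ m ih =>
            intro h1 h2
            have hrec := ih (by omega) (by omega)
            have hc2 : (2 : ℤ) ≤ (c.getD m 0 : ℤ) := by
              have h3 : C m ω = c.getD m 0 := hω m (by omega)
              have h4 : 2 ≤ C m ω := hbig m (by omega)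
              omega
            rw [pos_succ]
            push_cast
            omega
      rcases le_or_gt c.length N with hlen | hlen
      · have h5 := key c.length le_rfl hlen
        have h6 := hc.2
        omega
      · have h5 := key N (by omega) le_rfl
        have h6 := (hc.1 N hlen).1
        have h7 : ((N : ℕ) : ℤ) = b + 1 := by
          rw [hN]
          push_cast
          rw [Int.toNat_of_nonneg hb]
        omega
    have hS : (∑' c : HitW b (b + 1), wt p (c : List ℕ))
        + P (⋂ i ∈ Finset.range N, (C i) ⁻¹' {k : ℕ | 2 ≤ k}) ≤ 1 := by
      have h1 : ∑' c : HitW b (b + 1), wt p (c : List ℕ)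
          = P (⋃ c ∈ HitW b (b + 1), Cyl C c) := by
        rw [measure_biUnion (HitW b (b + 1)).to_countable (hitW_disjoint C b (b + 1))
          (fun c _ => measurableSet_cyl hC c)]
        exact tsum_congr fun c => (meas_cyl P C p hindep hdist c).symm
      have h2 : Disjoint (⋃ c ∈ HitW b (b + 1), Cyl C c)
          (⋂ i ∈ Finset.range N, (C i) ⁻¹' {k : ℕ | 2 ≤ k}) := by
        rw [Set.disjoint_left]
        intro ω hω hωE
        obtain ⟨c, hc, hωc⟩ := by
          simpa only [Set.mem_iUnion] using hω
        exact (Set.disjoint_left.1 (hdisjE c hc)) hωc hωE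
      rw [h1, ← measure_union h2 hmeasE]
      exact prob_le_one
    have hSlt : ∑' c : HitW b (b + 1), wt p (c : List ℕ) < 1 := by
      rcases lt_or_ge (∑' c : HitW b (b + 1), wt p (c : List ℕ)) 1 with h | h
      · exact h
      · exfalso
        have h3 : (1 : ℝ≥0∞) + P (⋂ i ∈ Finset.range N, (C i) ⁻¹' {k : ℕ | 2 ≤ k}) ≤ 1 + 0 := by
          rw [add_zero]
          exact le_trans (add_le_add_left h _) hS
        have h4 : P (⋂ i ∈ Finset.range N, (C i) ⁻¹' {k : ℕ | 2 ≤ k}) ≤ 0 := by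
          exact (ENNReal.add_le_add_iff_left (by norm_num)).1 h3
        exact absurd (le_antisymm h4 zero_le) hPEpos.ne'
    calc ENNReal.ofReal z * ∑' c : HitW b (b + 1), hitTerm p v c
        ≤ 1 * ∑' c : HitW b (b + 1), wt p (c : List ℕ) := by
          exact mul_le_mul' hz1 hBb_le
      _ = ∑' c : HitW b (b + 1), wt p (c : List ℕ) := one_mul _
      _ < 1 := hSlt
  · -- case `v < 1`
    have hlen1 : ∀ c ∈ HitW b (b + 1), 1 ≤ c.length := by
      intro c hc
      by_contra h
      have h0 : c.length = 0 := by omega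
      have := hc.2
      rw [h0, pos_zero] at this
      omega
    have hBb_le : ∑' c : HitW b (b + 1), hitTerm p v c
        ≤ ENNReal.ofReal v * ∑' c : HitW b (b + 1), wt p (c : List ℕ) := by
      rw [← ENNReal.tsum_mul_left]
      refine ENNReal.tsum_le_tsum fun c => ?_
      unfold hitTerm
      refine mul_le_mul' (ENNReal.ofReal_le_ofReal ?_) le_rfl
      calc v ^ (c : List ℕ).length ≤ v ^ 1 :=
            pow_le_pow_of_le_one hv.1.le hv.2 (hlen1 c c.2)
        _ = v := pow_one v
    calc ENNReal.ofReal z * ∑' c : HitW b (b + 1), hitTerm p v c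
        ≤ 1 * (ENNReal.ofReal v * ∑' c : HitW b (b + 1), wt p (c : List ℕ)) :=
          mul_le_mul' hz1 hBb_le
      _ ≤ 1 * (ENNReal.ofReal v * 1) := by
          exact mul_le_mul' le_rfl (mul_le_mul' le_rfl hwt_le)
      _ = ENNReal.ofReal v := by ring
      _ < 1 := ENNReal.ofReal_lt_one.2 hv1

lemma eind_univ_const (P : Measure Ω) [IsProbabilityMeasure P] {f : Ω → ℝ} {c : ℝ}
    (hf : ∀ ω, f ω = c) : Eind P Set.univ f = c := by
  unfold Eind
  have h1 : (fun ω => Set.indicator Set.univ f ω) = fun _ => c := by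
    funext ω
    rw [Set.indicator_univ, hf ω]
  rw [h1, integral_const]
  simp

/-- Joint transform of ruin time, deficit at ruin and cumulative dividends of the walk
reflected at the barrier `b`. -/
theorem dividends_deficit_joint_transform
    (P : Measure Ω) [IsProbabilityMeasure P]
    (C : ℕ → Ω → ℕ) (p : ℕ → ℝ)
    (hC : ∀ i, Measurable (C i))
    (hindep : ProbabilityTheory.iIndepFun C P)
    (hdist : ∀ i k, P {ω | C i ω = k} = ENNReal.ofReal (p k))
    (hnn : ∀ k, 0 ≤ p k) (hsum : ∑' k, p k = 1) (hp0 : 0 < p 0)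
    (v : ℝ) (hv : v ∈ Set.Ioc (0 : ℝ) 1) (z : ℝ) (hz : z ∈ Set.Ioc (0 : ℝ) 1)
    (w : ℝ) (hw : w ∈ Set.Ioc (0 : ℝ) 1) (hdeg : min (p 0 + p 1) v < 1)
    (b : ℕ) (x : ℤ) (hx : x ≤ (b : ℤ)) :
    Eind P {ω | Truin C x b ω < ⊤}
        (fun ω => v ^ (Truin C x b ω).toNat *
          w ^ (-(walk C x (Truin C x b ω).toNat ω - Rdiv C x b (Truin C x b ω).toNat ω)) *
          z ^ Rdiv C x b (Truin C x b ω).toNat ω)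
      = Z P C v w (p 0) x -
          (Z P C v w (p 0) ((b : ℤ) + 1) - z * Z P C v w (p 0) b) /
            (W P C v (p 0) ((b : ℤ) + 1) - z * W P C v (p 0) b) * W P C v (p 0) x := by
  have hb : (0 : ℤ) ≤ (b : ℤ) := Int.ofNat_nonneg b
  rcases lt_or_ge x 0 with hxneg | hx0
  · -- the case `x < 0`: immediate ruin
    have hT : ∀ ω, Truin C x b ω = ((0 : ℕ) : ℕ∞) := by
      intro ω
      unfold Truin
      refine sInf_image_eq ?_ fun m hm => absurd hm (Nat.not_lt_zero m)
      show walk C x 0 ω - Rdiv C x (b : ℤ) 0 ω ≤ -1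
      rw [walk_zero, Rdiv_zero hx]
      omega
    have hevent : {ω | Truin C x b ω < ⊤} = Set.univ := by
      ext ω
      simp only [Set.mem_setOf_eq, Set.mem_univ, iff_true, hT ω]
      exact_mod_cast WithTop.coe_lt_top (0 : ℕ)
    have hfun : ∀ ω : Ω, v ^ (Truin C x b ω).toNat *
        w ^ (-(walk C x (Truin C x b ω).toNat ω - Rdiv C x b (Truin C x b ω).toNat ω)) *
        z ^ Rdiv C x b (Truin C x b ω).toNat ω = w ^ (-x) := by
      intro ω
      rw [hT ω]
      simp only [ENat.toNat_coe]
      rw [walk_zero, Rdiv_zero hx]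
      simp
    have hLHS : Eind P {ω | Truin C x b ω < ⊤}
        (fun ω => v ^ (Truin C x b ω).toNat *
          w ^ (-(walk C x (Truin C x b ω).toNat ω - Rdiv C x b (Truin C x b ω).toNat ω)) *
          z ^ Rdiv C x b (Truin C x b ω).toNat ω) = w ^ (-x) := by
      rw [hevent]
      exact eind_univ_const P hfun
    have hWx : W P C v (p 0) x = 0 := by
      unfold W
      rw [if_neg (by omega)]
    have htau : ∀ ω, tauMinus C x (-1) ω = ((0 : ℕ) : ℕ∞) := by
      intro ω
      unfold tauMinus
      refine sInf_image_eq ?_ fun m hm => absurd hm (Nat.not_lt_zero m)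
      show walk C x 0 ω ≤ -1
      rw [walk_zero]
      omega
    have hPsix : Psi P C v w x = w ^ (-x) := by
      unfold Psi
      have hev : {ω | tauMinus C x (-1) ω < ⊤} = Set.univ := by
        ext ω
        simp only [Set.mem_setOf_eq, Set.mem_univ, iff_true, htau ω]
        exact_mod_cast WithTop.coe_lt_top (0 : ℕ)
      rw [hev]
      refine eind_univ_const P fun ω => ?_
      rw [htau ω]
      simp only [ENat.toNat_coe]
      rw [walk_zero]
      simp
    rw [hLHS]
    simp only [Z]
    rw [hWx, hPsix, mul_zero, mul_zero, add_zero, sub_zero]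
  · -- the main case `0 ≤ x ≤ b`
    have hxb : x ≤ (b : ℤ) := hx
    -- decomposition identities in ℝ≥0∞
    have hE1x := hit_tsum_split (p := p) (v := v) hv.1.le (x := 0) (y := x)
      (T := (b : ℤ) + 1) hx0 (by omega)
    have hE1b := hit_tsum_split (p := p) (v := v) hv.1.le (x := 0) (y := (b : ℤ))
      (T := (b : ℤ) + 1) hb (by omega)
    have hE2x := ruin_tsum_split (p := p) (v := v) (w := w) hv.1.le hb hxb
    have hE2b := ruin_tsum_split (p := p) (v := v) (w := w) hv.1.le hb (le_refl (b : ℤ))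
    have hE3x := refl_tsum_split (p := p) (v := v) (w := w) (z := z) hv.1.le hz.1 hb hxb
    have hE3b := refl_tsum_split (p := p) (v := v) (w := w) (z := z) hv.1.le hz.1 hb
      (le_refl (b : ℤ))
    -- bounds
    have hHSx_le := hit_tsum_le_one P C hC p hindep hdist hv 0 x
    have hHSb_le := hit_tsum_le_one P C hC p hindep hdist hv 0 (b : ℤ)
    have hHSb1_le := hit_tsum_le_one P C hC p hindep hdist hv 0 ((b : ℤ) + 1)
    have hBx_le := hit_tsum_le_one P C hC p hindep hdist hv x ((b : ℤ) + 1)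
    have hBb_le := hit_tsum_le_one P C hC p hindep hdist hv (b : ℤ) ((b : ℤ) + 1)
    have hPSx_le := ruin_tsum_le_one P C hC p hindep hdist hv hw x
    have hPSb_le := ruin_tsum_le_one P C hC p hindep hdist hv hw (b : ℤ)
    have hPSb1_le := ruin_tsum_le_one P C hC p hindep hdist hv hw ((b : ℤ) + 1)
    have hGSx_le := refl_tsum_le_one P C hC p hindep hdist hv hw hz (b : ℤ) x
    have hGSb_le := refl_tsum_le_one P C hC p hindep hdist hv hw hz (b : ℤ) (b : ℤ)
    -- positivity
    have hHSx_pos := hit_tsum_pos (p := p) hv.1 hp0 (x := 0) (y := x) le_rfl hx0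
    have hHSb_pos := hit_tsum_pos (p := p) hv.1 hp0 (x := 0) (y := (b : ℤ)) le_rfl hb
    have hHSb1_pos := hit_tsum_pos (p := p) hv.1 hp0 (x := 0) (y := (b : ℤ) + 1) le_rfl
      (by omega)
    have hBx_pos := hit_tsum_pos (p := p) hv.1 hp0 (x := x) (y := (b : ℤ) + 1) hx0 (by omega)
    have hBb_pos := hit_tsum_pos (p := p) hv.1 hp0 (x := (b : ℤ)) (y := (b : ℤ) + 1) hb
      (by omega)
    have hzB := zBb_lt_one P C hC hindep hdist hv hz hnn hsum hdeg hb
    -- identifications of the expectations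
    have hLHS : Eind P {ω | Truin C x b ω < ⊤}
        (fun ω => v ^ (Truin C x b ω).toNat *
          w ^ (-(walk C x (Truin C x b ω).toNat ω - Rdiv C x b (Truin C x b ω).toNat ω)) *
          z ^ Rdiv C x b (Truin C x b ω).toNat ω)
        = (∑' c : ReflW (b : ℤ) x, reflTerm p v w z (b : ℤ) x (c : List ℕ)).toReal :=
      refl_eind_eq_tsum P C hC p hindep hdist hv hw hz hxb
    have hPsix : Psi P C v w x
        = (∑' c : RuinW x, ruinTerm p v w x (c : List ℕ)).toReal :=
      Psi_eq_tsum P C hC p hindep hdist hv hw x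
    have hPsib : Psi P C v w (b : ℤ)
        = (∑' c : RuinW (b : ℤ), ruinTerm p v w (b : ℤ) (c : List ℕ)).toReal :=
      Psi_eq_tsum P C hC p hindep hdist hv hw (b : ℤ)
    have hPsib1 : Psi P C v w ((b : ℤ) + 1)
        = (∑' c : RuinW ((b : ℤ) + 1), ruinTerm p v w ((b : ℤ) + 1) (c : List ℕ)).toReal :=
      Psi_eq_tsum P C hC p hindep hdist hv hw ((b : ℤ) + 1)
    have hWx : W P C v (p 0) x
        = 1 / (p 0 * (∑' c : HitW 0 x, hitTerm p v (c : List ℕ)).toReal) := by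
      unfold W
      rw [if_pos hx0, hit_eind_eq_tsum P C hC p hindep hdist hv hx0]
      rfl
    have hWb : W P C v (p 0) (b : ℤ)
        = 1 / (p 0 * (∑' c : HitW 0 (b : ℤ), hitTerm p v (c : List ℕ)).toReal) := by
      unfold W
      rw [if_pos hb, hit_eind_eq_tsum P C hC p hindep hdist hv hb]
      rfl
    have hWb1 : W P C v (p 0) ((b : ℤ) + 1)
        = 1 / (p 0 * (∑' c : HitW 0 ((b : ℤ) + 1), hitTerm p v (c : List ℕ)).toReal) := by
      unfold W
      rw [if_pos (by omega : (0:ℤ) ≤ (b : ℤ) + 1),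
        hit_eind_eq_tsum P C hC p hindep hdist hv (by omega : (0:ℤ) ≤ (b : ℤ) + 1)]
      rfl
    -- pass to real numbers
    set HSx := ∑' c : HitW 0 x, hitTerm p v (c : List ℕ) with hHSxdef
    set HSb := ∑' c : HitW 0 (b : ℤ), hitTerm p v (c : List ℕ) with hHSbdef
    set HSb1 := ∑' c : HitW 0 ((b : ℤ) + 1), hitTerm p v (c : List ℕ) with hHSb1def
    set Bx := ∑' c : HitW x ((b : ℤ) + 1), hitTerm p v (c : List ℕ) with hBxdef
    set Bb := ∑' c : HitW (b : ℤ) ((b : ℤ) + 1), hitTerm p v (c : List ℕ) with hBbdef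
    set PSx := ∑' c : RuinW x, ruinTerm p v w x (c : List ℕ) with hPSxdef
    set PSb := ∑' c : RuinW (b : ℤ), ruinTerm p v w (b : ℤ) (c : List ℕ) with hPSbdef
    set PSb1 := ∑' c : RuinW ((b : ℤ) + 1), ruinTerm p v w ((b : ℤ) + 1) (c : List ℕ)
      with hPSb1def
    set ASx := ∑' c : ↥(RuinW x ∩ LowW (b : ℤ) x), ruinTerm p v w x (c : List ℕ) with hASxdef
    set ASb := ∑' c : ↥(RuinW (b : ℤ) ∩ LowW (b : ℤ) (b : ℤ)),
      ruinTerm p v w (b : ℤ) (c : List ℕ) with hASbdef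
    set GSx := ∑' c : ReflW (b : ℤ) x, reflTerm p v w z (b : ℤ) x (c : List ℕ) with hGSxdef
    set GSb := ∑' c : ReflW (b : ℤ) (b : ℤ), reflTerm p v w z (b : ℤ) (b : ℤ) (c : List ℕ)
      with hGSbdef
    have hASx_le : ASx ≤ 1 := le_trans (by rw [hE2x]; exact le_self_add) hPSx_le
    have hASb_le : ASb ≤ 1 := le_trans (by rw [hE2b]; exact le_self_add) hPSb_le
    have hBx_ne : Bx ≠ ⊤ := (lt_of_le_of_lt hBx_le ENNReal.one_lt_top).ne
    have hBb_ne : Bb ≠ ⊤ := (lt_of_le_of_lt hBb_le ENNReal.one_lt_top).ne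
    have hPSb1_ne : PSb1 ≠ ⊤ := (lt_of_le_of_lt hPSb1_le ENNReal.one_lt_top).ne
    have hASx_ne : ASx ≠ ⊤ := (lt_of_le_of_lt hASx_le ENNReal.one_lt_top).ne
    have hASb_ne : ASb ≠ ⊤ := (lt_of_le_of_lt hASb_le ENNReal.one_lt_top).ne
    have hGSb_ne : GSb ≠ ⊤ := (lt_of_le_of_lt hGSb_le ENNReal.one_lt_top).ne
    have hHSx_ne : HSx ≠ ⊤ := (lt_of_le_of_lt hHSx_le ENNReal.one_lt_top).ne
    have hHSb_ne : HSb ≠ ⊤ := (lt_of_le_of_lt hHSb_le ENNReal.one_lt_top).ne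
    have hHSb1_ne : HSb1 ≠ ⊤ := (lt_of_le_of_lt hHSb1_le ENNReal.one_lt_top).ne
    -- real versions of the identities
    have r1x : HSb1.toReal = HSx.toReal * Bx.toReal := by
      rw [hE1x, ENNReal.toReal_mul]
    have r1b : HSb1.toReal = HSb.toReal * Bb.toReal := by
      rw [hE1b, ENNReal.toReal_mul]
    have r2x : PSx.toReal = ASx.toReal + Bx.toReal * PSb1.toReal := by
      rw [hE2x, ENNReal.toReal_add hASx_ne (ENNReal.mul_ne_top hBx_ne hPSb1_ne),
        ENNReal.toReal_mul]
    have r2b : PSb.toReal = ASb.toReal + Bb.toReal * PSb1.toReal := by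
      rw [hE2b, ENNReal.toReal_add hASb_ne (ENNReal.mul_ne_top hBb_ne hPSb1_ne),
        ENNReal.toReal_mul]
    have r3x : GSx.toReal = ASx.toReal + Bx.toReal * (z * GSb.toReal) := by
      rw [hE3x, ENNReal.toReal_add hASx_ne (ENNReal.mul_ne_top hBx_ne
        (ENNReal.mul_ne_top ENNReal.ofReal_ne_top hGSb_ne)),
        ENNReal.toReal_mul, ENNReal.toReal_mul, ENNReal.toReal_ofReal hz.1.le]
    have r3b : GSb.toReal = ASb.toReal + Bb.toReal * (z * GSb.toReal) := by
      conv_lhs => rw [hE3b]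
      rw [ENNReal.toReal_add hASb_ne (ENNReal.mul_ne_top hBb_ne
        (ENNReal.mul_ne_top ENNReal.ofReal_ne_top hGSb_ne)),
        ENNReal.toReal_mul, ENNReal.toReal_mul, ENNReal.toReal_ofReal hz.1.le]
    -- real positivity and nondegeneracy
    have hHSx_rpos : 0 < HSx.toReal := ENNReal.toReal_pos hHSx_pos.ne' hHSx_ne
    have hHSb_rpos : 0 < HSb.toReal := ENNReal.toReal_pos hHSb_pos.ne' hHSb_ne
    have hHSb1_rpos : 0 < HSb1.toReal := ENNReal.toReal_pos hHSb1_pos.ne' hHSb1_ne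
    have hBx_rpos : 0 < Bx.toReal := ENNReal.toReal_pos hBx_pos.ne' hBx_ne
    have hBb_rpos : 0 < Bb.toReal := ENNReal.toReal_pos hBb_pos.ne' hBb_ne
    have hzBr : z * Bb.toReal < 1 := by
      have h1 : (ENNReal.ofReal z * Bb).toReal < (1 : ℝ≥0∞).toReal := by
        refine ENNReal.toReal_strict_mono (by norm_num) hzB
      rw [ENNReal.toReal_mul, ENNReal.toReal_ofReal hz.1.le, ENNReal.toReal_one] at h1
      exact h1
    have hden : (1 : ℝ) - z * Bb.toReal ≠ 0 := by linarith
    have hp0' : p 0 ≠ 0 := hp0.ne'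
    -- solve for `GSb.toReal`
    have hGb_solved : GSb.toReal = ASb.toReal / (1 - z * Bb.toReal) := by
      rw [eq_div_iff hden]
      linear_combination r3b
    -- rewrite the goal
    rw [hLHS]
    simp only [Z]
    rw [hPsix, hPsib, hPsib1, hWx, hWb, hWb1]
    have hWx2 : 1 / (p 0 * HSx.toReal) = Bx.toReal * (1 / (p 0 * HSb1.toReal)) := by
      rw [r1x]
      field_simp
    have hWb2 : 1 / (p 0 * HSb.toReal) = Bb.toReal * (1 / (p 0 * HSb1.toReal)) := by
      rw [r1b]
      field_simp
    have hASx_eq : ASx.toReal = PSx.toReal - Bx.toReal * PSb1.toReal := by linarith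
    have hASb_eq : ASb.toReal = PSb.toReal - Bb.toReal * PSb1.toReal := by linarith
    rw [r3x, hGb_solved, hASx_eq, hASb_eq, hWx2, hWb2]
    have hHSb1_rne : HSb1.toReal ≠ 0 := hHSb1_rpos.ne'
    field_simp
    ring


end RW
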